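/- arXiv:2008.10687 — 10 statements merged into one kernel-verified Lean document; each statement's English description precedes it below -/
import Mathlib

section
/- Let h and h' be orientation-preserving homeomorphisms of the real line, let ξ ≥ 1 be a common Lipschitz constant for the four maps h, h', h⁻¹, (h')⁻¹, and let δ ≥ 0 be a common bound for their displacements, i.e. |h(x) − x| ≤ δ, |h'(x) − x| ≤ δ, |h⁻¹(x) − x| ≤ δ and |(h')⁻¹(x) − x| ≤ δ for every x ∈ ℝ. Then the displacement of the commutator [h, h'] = h ∘ h' ∘ h⁻¹ ∘ (h')⁻¹ is bounded by 2(ξ − 1)δ, i.e. for every x ∈ ℝ, |h(h'(h⁻¹((h')⁻¹(x)))) − x| ≤ 2(ξ − 1)δ. -/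
/-- Key: if `f` is strictly monotone with `ξ`-Lipschitz inverse and `f` is
`ξ`-Lipschitz, then `x ↦ f x - x` is `(ξ-1)`-Lipschitz. -/
lemma disp_lip (f finv : ℝ → ℝ) (fmono : StrictMono f)
    (fli : Function.LeftInverse finv f) (ξ : ℝ) (hξ : 1 ≤ ξ)
    (fLip : ∀ a b : ℝ, |f a - f b| ≤ ξ * |a - b|)
    (finvLip : ∀ a b : ℝ, |finv a - finv b| ≤ ξ * |a - b|) :
    ∀ a b : ℝ, |(f a - a) - (f b - b)| ≤ (ξ - 1) * |a - b| := by
  have hξ0 : (0:ℝ) < ξ := lt_of_lt_of_le zero_lt_one hξ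
  -- WLOG lemma for b ≤ a
  have key : ∀ a b : ℝ, b ≤ a → |(f a - a) - (f b - b)| ≤ (ξ - 1) * |a - b| := by
    intro a b hba
    have hfab : f b ≤ f a := (fmono.le_iff_le).mpr hba
    have habs : |a - b| = a - b := abs_of_nonneg (by linarith)
    have hup : f a - f b ≤ ξ * (a - b) := by
      have := fLip a b
      rw [habs, abs_of_nonneg (by linarith)] at this
      linarith
    have hlow : a - b ≤ ξ * (f a - f b) := by
      have := finvLip (f a) (f b)
      rw [fli a, fli b, abs_of_nonneg (by linarith),
        abs_of_nonneg (by linarith)] at this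
      linarith
    rw [habs, abs_le]
    constructor
    · -- (f a - a) - (f b - b) ≥ -(ξ-1)(a-b)
      -- i.e. (a-b) - (f a - f b) ≤ (ξ-1)(a-b)
      have h1 : (a - b) - (f a - f b) ≤ (a - b) - (a - b) / ξ := by
        have : (a - b) / ξ ≤ f a - f b := (div_le_iff₀' hξ0).mpr hlow
        linarith
      have h2 : (a - b) - (a - b) / ξ ≤ (ξ - 1) * (a - b) := by
        have hdiv : (a - b) / ξ * ξ = a - b := div_mul_cancel₀ _ (ne_of_gt hξ0)
        have hd0 : 0 ≤ (a - b) / ξ := div_nonneg (by linarith) hξ0.le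
        nlinarith [mul_nonneg hd0 (mul_self_nonneg (ξ - 1))]
      linarith
    · nlinarith
  intro a b
  rcases le_total b a with hba | hab
  · exact key a b hba
  · have := key b a hab
    rw [abs_sub_comm, abs_sub_comm a b]
    exact this

/-- If `h, h'` are orientation-preserving homeomorphisms of `ℝ`,
`ξ ≥ 1` is a common Lipschitz constant for `h, h', h⁻¹, (h')⁻¹`, and `δ ≥ 0` a common
bound for their displacements, then the displacement of the commutator
`[h, h'] = h ∘ h' ∘ h⁻¹ ∘ (h')⁻¹` is bounded by `2(ξ − 1)δ`. -/
theorem stmt_1 (h h' hinv hinv' : ℝ → ℝ)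
    (hmono : StrictMono h) (hbij : Function.Bijective h)
    (h'mono : StrictMono h') (h'bij : Function.Bijective h')
    (hli : Function.LeftInverse hinv h) (hri : Function.RightInverse hinv h)
    (h'li : Function.LeftInverse hinv' h') (h'ri : Function.RightInverse hinv' h')
    (ξ δ : ℝ) (hξ : 1 ≤ ξ) (hδ : 0 ≤ δ)
    (hLip : ∀ a b : ℝ, |h a - h b| ≤ ξ * |a - b|)
    (h'Lip : ∀ a b : ℝ, |h' a - h' b| ≤ ξ * |a - b|)
    (hinvLip : ∀ a b : ℝ, |hinv a - hinv b| ≤ ξ * |a - b|)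
    (hinv'Lip : ∀ a b : ℝ, |hinv' a - hinv' b| ≤ ξ * |a - b|)
    (hdisp : ∀ x : ℝ, |h x - x| ≤ δ)
    (h'disp : ∀ x : ℝ, |h' x - x| ≤ δ)
    (hinvdisp : ∀ x : ℝ, |hinv x - x| ≤ δ)
    (hinv'disp : ∀ x : ℝ, |hinv' x - x| ≤ δ) :
    ∀ x : ℝ, |h (h' (hinv (hinv' x))) - x| ≤ 2 * (ξ - 1) * δ := by
  intro x
  set z := hinv (hinv' x) with hz
  have hz1 : h z = hinv' x := hri (hinv' x)
  have hz2 : h' (h z) = x := by rw [hz1]; exact h'ri x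
  have hξ1 : (0:ℝ) ≤ ξ - 1 := by linarith
  have A : |(h (h' z) - h' z) - (h z - z)| ≤ (ξ - 1) * δ := by
    calc |(h (h' z) - h' z) - (h z - z)| ≤ (ξ - 1) * |h' z - z| :=
          disp_lip h hinv hmono hli ξ hξ hLip hinvLip (h' z) z
      _ ≤ (ξ - 1) * δ := by
          exact mul_le_mul_of_nonneg_left (h'disp z) hξ1
  have B : |(h' (h z) - h z) - (h' z - z)| ≤ (ξ - 1) * δ := by
    calc |(h' (h z) - h z) - (h' z - z)| ≤ (ξ - 1) * |h z - z| :=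
          disp_lip h' hinv' h'mono h'li ξ hξ h'Lip hinv'Lip (h z) z
      _ ≤ (ξ - 1) * δ := by
          exact mul_le_mul_of_nonneg_left (hdisp z) hξ1
  have heq : h (h' z) - x =
      ((h (h' z) - h' z) - (h z - z)) - ((h' (h z) - h z) - (h' z - z)) := by
    rw [← hz2]; ring
  calc |h (h' z) - x| ≤ |(h (h' z) - h' z) - (h z - z)| + |(h' (h z) - h z) - (h' z - z)| := by
        rw [heq]; exact abs_sub _ _
    _ ≤ (ξ - 1) * δ + (ξ - 1) * δ := add_le_add A B
    _ = 2 * (ξ - 1) * δ := by ring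
end

section
/- Let Z be a compact metrizable space, φ a continuous flow on Z, and let m₁, m₂, m₃ be Borel probability measures on Z. If m₁ can be L₁-transported along φ to m₂ and m₂ can be L₂-transported along φ to m₃ (with L₁, L₂ ≥ 0), then m₁ can be (L₁ + L₂)-transported along φ to m₃. -/
open MeasureTheory

/-- The set `Δ^L = {(x₁,x₂) : ∃ l ∈ [−L,L], x₂ = φ(l,x₁)}` associated to a flow `φ`. -/
def flowDelta {Z : Type*} [TopologicalSpace Z] (φ : Flow ℝ Z) (L : ℝ) : Set (Z × Z) :=
  {p : Z × Z | ∃ l ∈ Set.Icc (-L) L, p.2 = φ l p.1}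

/-- The topological support of a measure: points all of whose open neighborhoods
have positive measure. -/
def measureSupport {W : Type*} [TopologicalSpace W] [MeasurableSpace W]
    (M : Measure W) : Set W :=
  {x : W | ∀ U : Set W, IsOpen U → x ∈ U → M U ≠ 0}

/-- `m₁` can be `L`-transported along the flow `φ` to `m₂`: there is a Borel probability
measure `M` on `Z × Z` with topological support contained in `Δ^L`, whose first and
second marginals are `m₁` and `m₂` respectively. -/
def Transports {Z : Type*} [TopologicalSpace Z] [MeasurableSpace Z]
    (φ : Flow ℝ Z) (L : ℝ) (m₁ m₂ : Measure Z) : Prop :=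
  ∃ M : Measure (Z × Z), IsProbabilityMeasure M ∧
    measureSupport M ⊆ flowDelta φ L ∧
    M.map Prod.fst = m₁ ∧ M.map Prod.snd = m₂

open ProbabilityTheory

/-- Auxiliary: projecting a compProd with a product kernel onto the first two components. -/
lemma map_compProd_prod_left {α β γ : Type*} [MeasurableSpace α] [MeasurableSpace β]
    [MeasurableSpace γ] (μ : Measure α) [SFinite μ] (κ : Kernel α β) (η : Kernel α γ)
    [IsMarkovKernel κ] [IsMarkovKernel η] :
    (μ ⊗ₘ (κ ×ₖ η)).map (fun p => (p.1, p.2.1)) = μ ⊗ₘ κ := by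
  have hf : Measurable (fun p : α × (β × γ) => (p.1, p.2.1)) :=
    measurable_fst.prodMk (measurable_snd.fst)
  ext s hs
  rw [Measure.map_apply hf hs, Measure.compProd_apply (hf hs), Measure.compProd_apply hs]
  refine lintegral_congr fun a => ?_
  have : (Prod.mk a ⁻¹' ((fun p : α × (β × γ) => (p.1, p.2.1)) ⁻¹' s))
      = (Prod.mk a ⁻¹' s) ×ˢ (Set.univ : Set γ) := by
    ext q; simp [Set.mem_prod]
  rw [this, Kernel.prod_apply, Measure.prod_prod, measure_univ, mul_one]

/-- Auxiliary: projecting a compProd with a product kernel onto the outer components. -/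
lemma map_compProd_prod_right {α β γ : Type*} [MeasurableSpace α] [MeasurableSpace β]
    [MeasurableSpace γ] (μ : Measure α) [SFinite μ] (κ : Kernel α β) (η : Kernel α γ)
    [IsMarkovKernel κ] [IsMarkovKernel η] :
    (μ ⊗ₘ (κ ×ₖ η)).map (fun p => (p.1, p.2.2)) = μ ⊗ₘ η := by
  have hf : Measurable (fun p : α × (β × γ) => (p.1, p.2.2)) :=
    measurable_fst.prodMk (measurable_snd.snd)
  ext s hs
  rw [Measure.map_apply hf hs, Measure.compProd_apply (hf hs), Measure.compProd_apply hs]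
  refine lintegral_congr fun a => ?_
  have : (Prod.mk a ⁻¹' ((fun p : α × (β × γ) => (p.1, p.2.2)) ⁻¹' s))
      = (Set.univ : Set β) ×ˢ (Prod.mk a ⁻¹' s) := by
    ext q; simp [Set.mem_prod]
  rw [this, Kernel.prod_apply, Measure.prod_prod, measure_univ, one_mul]

/-- In a second countable space, if the topological support of `M` is contained in a set `F`,
then the complement of `F` is `M`-null. -/
lemma measure_compl_eq_zero_of_measureSupport_subset {W : Type*} [TopologicalSpace W]
    [MeasurableSpace W] [SecondCountableTopology W] {M : Measure W} {F : Set W}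
    (h : measureSupport M ⊆ F) : M Fᶜ = 0 := by
  set S : Set (Set W) := {U | IsOpen U ∧ M U = 0}
  obtain ⟨T, hTc, hTS, hT⟩ := TopologicalSpace.isOpen_sUnion_countable S (fun U hU => hU.1)
  have hcover : Fᶜ ⊆ ⋃₀ S := by
    intro x hx
    by_cases hxs : x ∈ measureSupport M
    · exact absurd (h hxs) hx
    · simp only [measureSupport, Set.mem_setOf_eq, not_forall] at hxs
      obtain ⟨U, hUo, hxU, hU0⟩ := hxs
      exact ⟨U, ⟨hUo, not_not.mp hU0⟩, hxU⟩
  rw [← hT] at hcover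
  refine measure_mono_null hcover ?_
  exact (measure_sUnion_null_iff hTc).mpr fun U hU => (hTS hU).2

/-- `Δ^L` is a closed subset of `Z × Z` for a continuous flow on a compact Hausdorff space. -/
lemma isClosed_flowDelta {Z : Type*} [TopologicalSpace Z] [CompactSpace Z] [T2Space Z]
    (φ : Flow ℝ Z) (L : ℝ) : IsClosed (flowDelta φ L) := by
  have himg : flowDelta φ L
      = (fun q : ℝ × Z => (q.2, φ q.1 q.2)) '' (Set.Icc (-L) L ×ˢ Set.univ) := by
    ext p
    constructor
    · rintro ⟨l, hl, hp⟩
      exact ⟨(l, p.1), ⟨hl, Set.mem_univ _⟩, by simp [← hp]⟩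
    · rintro ⟨⟨l, x⟩, ⟨hl, -⟩, rfl⟩
      exact ⟨l, hl, rfl⟩
  rw [himg]
  have hc : Continuous (fun q : ℝ × Z => (q.2, φ q.1 q.2)) :=
    continuous_snd.prodMk φ.cont'
  exact (((isCompact_Icc.prod isCompact_univ).image hc)).isClosed

/-- transitivity of transport: if `m₁` can be `L₁`-transported along `φ`
to `m₂` and `m₂` can be `L₂`-transported along `φ` to `m₃`, then `m₁` can be
`(L₁ + L₂)`-transported along `φ` to `m₃`. -/
theorem stmt_5 {Z : Type*} [TopologicalSpace Z] [CompactSpace Z]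
    [TopologicalSpace.MetrizableSpace Z] [MeasurableSpace Z] [BorelSpace Z]
    (φ : Flow ℝ Z) (L₁ L₂ : ℝ) (hL₁ : 0 ≤ L₁) (hL₂ : 0 ≤ L₂)
    (m₁ m₂ m₃ : Measure Z) [IsProbabilityMeasure m₁] [IsProbabilityMeasure m₂]
    [IsProbabilityMeasure m₃]
    (h12 : Transports φ L₁ m₁ m₂) (h23 : Transports φ L₂ m₂ m₃) :
    Transports φ (L₁ + L₂) m₁ m₃ := by
  letI := TopologicalSpace.metrizableSpaceMetric Z
  haveI : StandardBorelSpace Z := inferInstance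
  haveI : SecondCountableTopology Z := inferInstance
  haveI : Nonempty Z := by
    by_contra h
    rw [not_nonempty_iff] at h
    have huniv : m₂ Set.univ = 1 := measure_univ
    rw [Set.univ_eq_empty_iff.mpr h] at huniv
    simp at huniv
  obtain ⟨M₁, hP₁, hs₁, hf₁, hg₁⟩ := h12
  obtain ⟨M₂, hP₂, hs₂, hf₂, hg₂⟩ := h23
  have hn₁ : M₁ (flowDelta φ L₁)ᶜ = 0 :=
    measure_compl_eq_zero_of_measureSupport_subset hs₁
  have hn₂ : M₂ (flowDelta φ L₂)ᶜ = 0 :=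
    measure_compl_eq_zero_of_measureSupport_subset hs₂
  -- swap the first coupling so that both couplings have `m₂` as first marginal
  set N₁ : Measure (Z × Z) := M₁.map Prod.swap with hN₁def
  haveI : IsProbabilityMeasure N₁ :=
    Measure.isProbabilityMeasure_map measurable_swap.aemeasurable
  have hN₁fst : N₁.fst = m₂ := by
    rw [Measure.fst, hN₁def, Measure.map_map measurable_fst measurable_swap]
    exact hg₁
  have hM₂fst : M₂.fst = m₂ := by rw [Measure.fst]; exact hf₂
  set κ₁ := N₁.condKernel with hκ₁
  set κ₂ := M₂.condKernel with hκ₂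
  have hd₁ : m₂ ⊗ₘ κ₁ = N₁ := by rw [← hN₁fst]; exact N₁.disintegrate κ₁
  have hd₂ : m₂ ⊗ₘ κ₂ = M₂ := by rw [← hM₂fst]; exact M₂.disintegrate κ₂
  -- glue the couplings
  set P : Measure (Z × (Z × Z)) := m₂ ⊗ₘ (κ₁ ×ₖ κ₂) with hPdef
  haveI : IsProbabilityMeasure P := by rw [hPdef]; infer_instance
  have hPu : P.map (fun p : Z × (Z × Z) => (p.1, p.2.1)) = N₁ := by
    rw [hPdef, map_compProd_prod_left, hd₁]
  have hPv : P.map (fun p : Z × (Z × Z) => (p.1, p.2.2)) = M₂ := by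
    rw [hPdef, map_compProd_prod_right, hd₂]
  have hmeas_u : Measurable (fun p : Z × (Z × Z) => (p.1, p.2.1)) :=
    measurable_fst.prodMk measurable_snd.fst
  have hmeas_v : Measurable (fun p : Z × (Z × Z) => (p.1, p.2.2)) :=
    measurable_fst.prodMk measurable_snd.snd
  -- the projection of `P` onto the swapped first coupling recovers `M₁`
  have hPw : P.map (fun p : Z × (Z × Z) => (p.2.1, p.1)) = M₁ := by
    have h1 : P.map (fun p : Z × (Z × Z) => (p.2.1, p.1))
        = (P.map (fun p : Z × (Z × Z) => (p.1, p.2.1))).map Prod.swap := by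
      rw [Measure.map_map measurable_swap hmeas_u]
      rfl
    rw [h1, hPu, hN₁def, Measure.map_map measurable_swap measurable_swap,
      Prod.swap_swap_eq, Measure.map_id]
  set M : Measure (Z × Z) := P.map Prod.snd with hMdef
  haveI : IsProbabilityMeasure M :=
    Measure.isProbabilityMeasure_map measurable_snd.aemeasurable
  refine ⟨M, inferInstance, ?_, ?_, ?_⟩
  · -- support condition
    have hΔ : IsClosed (flowDelta φ (L₁ + L₂)) := isClosed_flowDelta φ _
    -- `M` gives no mass to the complement of `Δ^{L₁+L₂}`
    have hA₁ : P ((fun p : Z × (Z × Z) => (p.2.1, p.1)) ⁻¹' (flowDelta φ L₁)ᶜ) = 0 := by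
      rw [← Measure.map_apply (measurable_snd.fst.prodMk measurable_fst)
        (isClosed_flowDelta φ L₁).measurableSet.compl, hPw]
      exact hn₁
    have hA₂ : P ((fun p : Z × (Z × Z) => (p.1, p.2.2)) ⁻¹' (flowDelta φ L₂)ᶜ) = 0 := by
      rw [← Measure.map_apply hmeas_v (isClosed_flowDelta φ L₂).measurableSet.compl, hPv]
      exact hn₂
    have hsub : Prod.snd ⁻¹' (flowDelta φ (L₁ + L₂))ᶜ
        ⊆ ((fun p : Z × (Z × Z) => (p.2.1, p.1)) ⁻¹' (flowDelta φ L₁)ᶜ)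
          ∪ ((fun p : Z × (Z × Z) => (p.1, p.2.2)) ⁻¹' (flowDelta φ L₂)ᶜ) := by
      intro p hp
      by_contra hcon
      simp only [Set.mem_union, Set.mem_preimage, Set.mem_compl_iff, not_or, not_not] at hcon
      obtain ⟨⟨l, hl, hl2⟩, ⟨l', hl', hl2'⟩⟩ := hcon
      refine hp ⟨l' + l, ⟨by linarith [hl.1, hl'.1], by linarith [hl.2, hl'.2]⟩, ?_⟩
      rw [φ.map_add, ← hl2, ← hl2']
    have hMnull : M (flowDelta φ (L₁ + L₂))ᶜ = 0 := by
      rw [hMdef, Measure.map_apply measurable_snd hΔ.measurableSet.compl]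
      exact measure_mono_null hsub (measure_union_null hA₁ hA₂)
    intro x hx
    by_contra hxΔ
    exact hx _ hΔ.isOpen_compl hxΔ hMnull
  · -- first marginal
    have h1 : M.map Prod.fst
        = (P.map (fun p : Z × (Z × Z) => (p.2.1, p.1))).map Prod.fst := by
      rw [hMdef, Measure.map_map measurable_fst measurable_snd,
        Measure.map_map measurable_fst (measurable_snd.fst.prodMk measurable_fst)]
      rfl
    rw [h1, hPw]
    exact hf₁
  · -- second marginal
    have h2 : M.map Prod.snd
        = (P.map (fun p : Z × (Z × Z) => (p.1, p.2.2))).map Prod.snd := by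
      rw [hMdef, Measure.map_map measurable_snd measurable_snd,
        Measure.map_map measurable_snd hmeas_v]
      rfl
    rw [h2, hPv]
    exact hg₂
end

section
/- Let Z be a compact metrizable space, φ a continuous flow on Z, L ≥ 0, and suppose the Borel probability measure m₁ can be L-transported along φ to the Borel probability measure m₂. Then: (i) for every open set U ⊆ Z, m₂(U) ≤ m₁(⋃_{l ∈ [−L,L]} φ(l, U)); and (ii) for every closed set C ⊆ Z, m₁(⋂_{l ∈ [−L,L]} φ(l, C)) ≤ m₂(C). -/
open MeasureTheory

lemma measure_compl_measureSupport {W : Type*} [TopologicalSpace W] [MeasurableSpace W]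
    [SecondCountableTopology W] (M : Measure W) : M (measureSupport M)ᶜ = 0 := by
  apply measure_null_of_locally_null
  intro x hx
  simp only [measureSupport, Set.mem_compl_iff, Set.mem_setOf_eq, not_forall] at hx
  obtain ⟨U, hU, hxU, hU0⟩ := hx
  push_neg at hU0
  exact ⟨U, mem_nhdsWithin_of_mem_nhds (hU.mem_nhds hxU), hU0⟩

lemma flow_image_eq {Z : Type*} [TopologicalSpace Z] (φ : Flow ℝ Z) (l : ℝ) (S : Set Z) :
    (fun z => φ l z) '' S = (fun z => φ (-l) z) ⁻¹' S := by
  ext x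
  constructor
  · rintro ⟨u, hu, rfl⟩
    simpa [← Flow.map_add, Flow.map_zero_apply] using hu
  · intro hx
    exact ⟨φ (-l) x, hx, by simp [← Flow.map_add, Flow.map_zero_apply]⟩

/-- if `m₁` can be `L`-transported along `φ` to `m₂`, then
(i) for every open `U`, `m₂ U ≤ m₁ (⋃_{l∈[−L,L]} φ(l,U))`, and
(ii) for every closed `C`, `m₁ (⋂_{l∈[−L,L]} φ(l,C)) ≤ m₂ C`. -/
theorem stmt_7 {Z : Type*} [TopologicalSpace Z] [CompactSpace Z]
    [TopologicalSpace.MetrizableSpace Z] [MeasurableSpace Z] [BorelSpace Z]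
    (φ : Flow ℝ Z) (L : ℝ) (hL : 0 ≤ L)
    (m₁ m₂ : Measure Z) [IsProbabilityMeasure m₁] [IsProbabilityMeasure m₂]
    (h : Transports φ L m₁ m₂) :
    (∀ U : Set Z, IsOpen U →
        m₂ U ≤ m₁ (⋃ l ∈ Set.Icc (-L) L, (fun z => φ l z) '' U)) ∧
    (∀ C : Set Z, IsClosed C →
        m₁ (⋂ l ∈ Set.Icc (-L) L, (fun z => φ l z) '' C) ≤ m₂ C) := by
  letI : MetricSpace Z := TopologicalSpace.metrizableSpaceMetric Z
  obtain ⟨M, hMprob, hsupp, h1, h2⟩ := h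
  have hnull : M (measureSupport M)ᶜ = 0 := measure_compl_measureSupport M
  constructor
  · intro U hU
    set V : Set Z := ⋃ l ∈ Set.Icc (-L) L, (fun z => φ l z) '' U with hV
    have hVopen : IsOpen V := by
      refine isOpen_biUnion fun l _ => ?_
      rw [flow_image_eq]
      exact hU.preimage (φ.continuous continuous_const continuous_id)
    have hincl : Prod.snd ⁻¹' U ⊆ Prod.fst ⁻¹' V ∪ (measureSupport M)ᶜ := by
      intro p hp
      by_cases hps : p ∈ measureSupport M
      · left
        obtain ⟨l, hl, hl2⟩ := hsupp hps
        refine Set.mem_biUnion (Set.mem_Icc.2 ⟨neg_le_neg hl.2, neg_le_of_neg_le hl.1⟩)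
          ⟨p.2, hp, ?_⟩
        show φ (-l) p.2 = p.1
        rw [hl2, ← Flow.map_add]
        simp [Flow.map_zero_apply]
      · right; exact hps
    calc m₂ U = M (Prod.snd ⁻¹' U) := by
          rw [← h2, Measure.map_apply measurable_snd hU.measurableSet]
      _ ≤ M (Prod.fst ⁻¹' V) + M (measureSupport M)ᶜ :=
          le_trans (measure_mono hincl) (measure_union_le _ _)
      _ = m₁ V := by
          rw [hnull, add_zero, ← h1, Measure.map_apply measurable_fst hVopen.measurableSet]
  · intro C hC
    set K : Set Z := ⋂ l ∈ Set.Icc (-L) L, (fun z => φ l z) '' C with hK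
    have hKclosed : IsClosed K := by
      refine isClosed_biInter fun l _ => ?_
      rw [flow_image_eq]
      exact hC.preimage (φ.continuous continuous_const continuous_id)
    have hincl : Prod.fst ⁻¹' K ⊆ Prod.snd ⁻¹' C ∪ (measureSupport M)ᶜ := by
      intro p hp
      by_cases hps : p ∈ measureSupport M
      · left
        obtain ⟨l, hl, hl2⟩ := hsupp hps
        have hmem : p.1 ∈ (fun z => φ (-l) z) '' C :=
          Set.mem_iInter₂.1 hp (-l) (Set.mem_Icc.2 ⟨neg_le_neg hl.2, neg_le_of_neg_le hl.1⟩)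
        obtain ⟨c, hc, hcl⟩ := hmem
        have : p.2 = c := by
          rw [hl2, ← hcl, ← Flow.map_add]
          simp [Flow.map_zero_apply]
        rwa [Set.mem_preimage, this]
      · right; exact hps
    calc m₁ K = M (Prod.fst ⁻¹' K) := by
          rw [← h1, Measure.map_apply measurable_fst hKclosed.measurableSet]
      _ ≤ M (Prod.snd ⁻¹' C) + M (measureSupport M)ᶜ :=
          le_trans (measure_mono hincl) (measure_union_le _ _)
      _ = m₂ C := by
          rw [hnull, add_zero, ← h2, Measure.map_apply measurable_snd hC.measurableSet]
end

section
/- Let Z be a compact metrizable space, φ a continuous flow on Z, α > 0 and L ≥ 0. Let T₀ ⊆ Z be a Borel set such that the map (s, τ) ↦ φ(s, τ) is injective on [−L, α + L] × T₀, and set B := φ([0, α] × T₀) (a Borel subset of Z). Let m₁ be a φ-invariant Borel probability measure on Z with m₁(B) > 0, and let m₂ be a Borel probability measure that is L-transported from m₁ along φ. Then |m₂(B) − m₁(B)| ≤ (2L/α) · m₁(B). -/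
open MeasureTheory

theorem lin_bound (g : ℝ → ℝ) (α L : ℝ) (hα : 0 < α) (hL : 0 ≤ L)
    (gnn : ∀ t, 0 ≤ g t)
    (gadd : ∀ x y, 0 ≤ x → 0 ≤ y → x + y ≤ α + 2 * L → g (x + y) = g x + g y) :
    g (2 * L) ≤ (2 * L / α) * g α := by
  have g0 : g 0 = 0 := by
    have := gadd 0 0 le_rfl le_rfl (by linarith); simp at this; linarith
  have gmul : ∀ (k : ℕ) (d : ℝ), 0 ≤ d → k * d ≤ α + 2 * L → g (k * d) = k * g d := by
    intro k
    induction k with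
    | zero => intro d _ _; simpa using g0
    | succ n ih =>
      intro d hd hkd
      have hnd : (n : ℝ) * d ≤ (n + 1 : ℕ) * d := by push_cast; nlinarith
      have h1 : ((n + 1 : ℕ) : ℝ) * d = (n : ℝ) * d + d := by push_cast; ring
      rw [h1, gadd _ _ (by positivity) hd (by rw [← h1]; exact hkd),
        ih d hd (le_trans hnd hkd)]
      push_cast; ring
  have gmono : ∀ x y, 0 ≤ x → x ≤ y → y ≤ α + 2 * L → g x ≤ g y := by
    intro x y hx hxy hy
    have := gadd x (y - x) hx (by linarith) (by linarith)
    have h2 : x + (y - x) = y := by ring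
    rw [h2] at this
    nlinarith [gnn (y - x)]
  have key : ∀ n : ℕ, 1 ≤ n → g (2 * L) ≤ (2 * L / α) * g α + g α / n := by
    intro n hn
    have hn0 : (0 : ℝ) < n := by exact_mod_cast hn
    set k := ⌈2 * L * n / α⌉₊ with hk
    have hd : (0 : ℝ) ≤ α / n := by positivity
    have hkge : 2 * L * n / α ≤ k := Nat.le_ceil _
    have hklt : (k : ℝ) < 2 * L * n / α + 1 := Nat.ceil_lt_add_one (by positivity)
    have h2L : 2 * L ≤ k * (α / n) := by
      have := mul_le_mul_of_nonneg_right hkge hd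
      have he : 2 * L * n / α * (α / n) = 2 * L := by field_simp
      linarith [he ▸ this]
    have hkd : (k : ℝ) * (α / n) ≤ α + 2 * L := by
      have h1 : (k : ℝ) * (α / n) ≤ (2 * L * n / α + 1) * (α / n) :=
        mul_le_mul_of_nonneg_right hklt.le hd
      have h2 : (2 * L * n / α + 1) * (α / n) = 2 * L + α / n := by field_simp
      have hn1 : (1:ℝ) ≤ n := by exact_mod_cast hn
      have h3 : α / n ≤ α := by rw [div_le_iff₀ hn0]; nlinarith
      rw [h2] at h1; linarith
    have hn' : (n : ℝ) * (α / n) = α := by field_simp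
    have gα : g α = n * g (α / n) := by
      have := gmul n (α / n) hd (by rw [hn']; linarith)
      rw [hn'] at this; exact this
    have hle := gmono (2 * L) (k * (α / n)) (by positivity) h2L hkd
    rw [gmul k (α / n) hd hkd] at hle
    have hga : g (α / n) = g α / n := by rw [gα]; field_simp
    rw [hga] at hle
    calc g (2 * L) ≤ k * (g α / n) := hle
      _ ≤ (2 * L * n / α + 1) * (g α / n) :=
          mul_le_mul_of_nonneg_right hklt.le (div_nonneg (gnn α) hn0.le)
      _ = (2 * L / α) * g α + g α / n := by field_simp
  refine le_of_forall_pos_le_add fun ε hε => ?_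
  obtain ⟨n, hn⟩ := exists_nat_gt (g α / ε)
  have h := key (n + 1) (by omega)
  have hnn : (0:ℝ) < (n:ℝ) + 1 := by positivity
  have hlt : g α / ((n:ℝ) + 1) < ε := by
    rw [div_lt_iff₀ hnn]
    rcases le_or_gt (g α) ((n:ℝ) * ε) with h'|h'
    · nlinarith
    · nlinarith [(div_lt_iff₀ hε).mp hn]
  push_cast at h
  linarith


/-- flow boxes and transported measures: let `B = φ([0,α] × T₀)` be a
flow box of length `α` (with `(s,τ) ↦ φ(s,τ)` injective on `[−L, α+L] × T₀`), let `m₁` be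
a `φ`-invariant Borel probability measure with `m₁ B > 0`, and let `m₂` be `L`-transported
from `m₁` along `φ`. Then `|m₂ B − m₁ B| ≤ (2L/α)·m₁ B`. -/
theorem stmt_8 {Z : Type*} [TopologicalSpace Z] [CompactSpace Z]
    [TopologicalSpace.MetrizableSpace Z] [MeasurableSpace Z] [BorelSpace Z]
    (φ : Flow ℝ Z) (α L : ℝ) (hα : 0 < α) (hL : 0 ≤ L)
    (T₀ : Set Z) (hT₀ : MeasurableSet T₀)
    (hinj : Set.InjOn (fun p : ℝ × Z => φ p.1 p.2) (Set.Icc (-L) (α + L) ×ˢ T₀))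
    (m₁ m₂ : Measure Z) [IsProbabilityMeasure m₁] [IsProbabilityMeasure m₂]
    (hminv : ∀ t : ℝ, m₁.map (fun z => φ t z) = m₁)
    (hBpos : 0 < m₁ ((fun p : ℝ × Z => φ p.1 p.2) '' (Set.Icc 0 α ×ˢ T₀)))
    (htrans : Transports φ L m₁ m₂) :
    |(m₂ ((fun p : ℝ × Z => φ p.1 p.2) '' (Set.Icc 0 α ×ˢ T₀))).toReal -
        (m₁ ((fun p : ℝ × Z => φ p.1 p.2) '' (Set.Icc 0 α ×ˢ T₀))).toReal| ≤
      (2 * L / α) * (m₁ ((fun p : ℝ × Z => φ p.1 p.2) '' (Set.Icc 0 α ×ˢ T₀))).toReal := by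
  letI : MetricSpace Z := TopologicalSpace.metrizableSpaceMetric Z
  obtain ⟨M, hMprob, hMsupp, hMfst, hMsnd⟩ := htrans
  set F : ℝ × Z → Z := fun p => φ p.1 p.2 with hF
  set S : ℝ → ℝ → Set Z := fun a b => F '' (Set.Icc a b ×ˢ T₀) with hS
  have hcont : Continuous F := φ.cont'
  -- measurability of flow boxes
  have hmeasS : ∀ a b, -L ≤ a → b ≤ α + L → MeasurableSet (S a b) := by
    intro a b ha hb
    exact (measurableSet_Icc.prod hT₀).image_of_continuousOn_injOn
      hcont.continuousOn
      (hinj.mono (Set.prod_mono (Set.Icc_subset_Icc ha hb) subset_rfl))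
  -- invariance of m₁ under flow images
  have hminv' : ∀ (t : ℝ) (A : Set Z), MeasurableSet A → m₁ (φ t '' A) = m₁ A := by
    intro t A hA
    rw [φ.image_eq_preimage_symm]
    have h := hminv (-t)
    conv_rhs => rw [← h]
    rw [Measure.map_apply (φ.continuous_toFun (-t)).measurable hA]
  -- translation of flow boxes
  have htr : ∀ (t a b : ℝ), φ t '' S a b = S (a + t) (b + t) := by
    intro t a b
    ext x
    simp only [hS, Set.mem_image, Set.mem_prod, Set.mem_Icc, Prod.exists]
    constructor
    · rintro ⟨y, ⟨s, τ, ⟨⟨hs1, hs2⟩, hτ⟩, rfl⟩, rfl⟩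
      exact ⟨s + t, τ, ⟨⟨by linarith, by linarith⟩, hτ⟩,
        by show φ (s + t) τ = φ t (F (s, τ)); rw [add_comm s t, φ.map_add]⟩
    · rintro ⟨u, τ, ⟨⟨hu1, hu2⟩, hτ⟩, rfl⟩
      exact ⟨φ (u - t) τ, ⟨u - t, τ, ⟨⟨by linarith, by linarith⟩, hτ⟩, rfl⟩,
        by show φ t (φ (u - t) τ) = F (u, τ); rw [← φ.map_add]; congr 1; ring⟩
  -- T₀ is null
  have hT0null : m₁ T₀ = 0 := by
    by_contra h0
    have hfin : m₁ T₀ ≠ ⊤ := measure_ne_top _ _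
    have hc : 0 < (m₁ T₀).toReal := ENNReal.toReal_pos h0 hfin
    obtain ⟨n, hn⟩ := exists_nat_gt (1 / (m₁ T₀).toReal)
    set c := (m₁ T₀).toReal with hcdef
    have hδ : (0:ℝ) < α / (n + 1) := by positivity
    set A : ℕ → Set Z := fun i => φ ((i : ℝ) * (α / (n + 1))) '' T₀ with hA
    have hAmeas : ∀ i, MeasurableSet (A i) := by
      intro i
      rw [hA]
      simp only
      rw [φ.image_eq_preimage_symm]
      exact hT₀.preimage (φ.continuous_toFun _).measurable
    have hmemIcc : ∀ i : ℕ, i < n + 1 → (i : ℝ) * (α / (n + 1)) ∈ Set.Icc (-L) (α + L) := by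
      intro i hi
      have hi' : (i : ℝ) ≤ n := by exact_mod_cast Nat.lt_succ_iff.mp hi
      have h1 : (0:ℝ) ≤ (i : ℝ) * (α / (n + 1)) := by positivity
      have h2 : (i : ℝ) * (α / (n + 1)) ≤ α := by
        rw [mul_div_assoc'] at *
        rw [div_le_iff₀ (by positivity : (0:ℝ) < (n:ℝ) + 1)]
        nlinarith
      exact ⟨by linarith, by linarith⟩
    have hAdisj : (↑(Finset.range (n + 1)) : Set ℕ).PairwiseDisjoint A := by
      intro i hi j hj hij
      simp only [Finset.coe_range, Set.mem_Iio] at hi hj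
      rw [Function.onFun, Set.disjoint_left]
      rintro x ⟨τ, hτ, rfl⟩ ⟨τ', hτ', hx⟩
      have h1 := hmemIcc i hi
      have h2 := hmemIcc j hj
      have := hinj (Set.mk_mem_prod h1 hτ) (Set.mk_mem_prod h2 hτ') hx.symm
      have heq : (i : ℝ) * (α / (n + 1)) = (j : ℝ) * (α / (n + 1)) :=
        congrArg Prod.fst this
      have : (i : ℝ) = j := mul_right_cancel₀ hδ.ne' heq
      exact hij (by exact_mod_cast this)
    have hsum : ∑ i ∈ Finset.range (n + 1), m₁ (A i) ≤ 1 := by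
      rw [← measure_biUnion_finset hAdisj (fun i _ => hAmeas i)]
      exact prob_le_one
    have hAval : ∀ i, m₁ (A i) = m₁ T₀ := fun i => hminv' _ _ hT₀
    rw [Finset.sum_congr rfl (fun i _ => hAval i), Finset.sum_const, Finset.card_range,
      nsmul_eq_mul] at hsum
    have hreal : ((n:ℝ) + 1) * c ≤ 1 := by
      have h2 := ENNReal.toReal_mono (by simp) hsum
      rw [ENNReal.toReal_mul] at h2
      simp only [ENNReal.toReal_natCast, ENNReal.toReal_one] at h2
      push_cast at h2
      convert h2 using 2 <;> simp [hcdef]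
    have : 1 < (n:ℝ) * c := by
      rw [div_lt_iff₀ hc] at hn; linarith
    nlinarith
  -- slices are null
  have hslice : ∀ b : ℝ, m₁ (S b b) = 0 := by
    intro b
    have hSbb : S b b = φ b '' T₀ := by
      rw [hS]
      simp only [Set.Icc_self]
      ext x
      simp only [Set.mem_image, Set.mem_prod, Set.mem_singleton_iff, Prod.exists]
      constructor
      · rintro ⟨s, τ, ⟨rfl, hτ⟩, rfl⟩; exact ⟨τ, hτ, rfl⟩
      · rintro ⟨τ, hτ, rfl⟩; exact ⟨b, τ, ⟨rfl, hτ⟩, rfl⟩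
    rw [hSbb, hminv' b T₀ hT₀, hT0null]
  -- additivity (in ℝ≥0∞)
  have Gadd : ∀ x y : ℝ, 0 ≤ x → 0 ≤ y → x + y ≤ α + 2 * L →
      m₁ (S (-L) (x + y - L)) = m₁ (S (-L) (x - L)) + m₁ (S (-L) (y - L)) := by
    intro x y hx hy hxy
    have hb : -L ≤ x - L := by linarith
    have hbc : x - L ≤ x + y - L := by linarith
    have hcL : x + y - L ≤ α + L := by linarith
    have hm2' := hmeasS (x - L) (x + y - L) (by linarith) hcL
    have hsplit : S (-L) (x + y - L) = S (-L) (x - L) ∪ S (x - L) (x + y - L) := by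
      rw [hS]
      simp only
      rw [← Set.Icc_union_Icc_eq_Icc hb hbc, Set.union_prod, Set.image_union]
    have hcap : m₁ (S (-L) (x - L) ∩ S (x - L) (x + y - L)) = 0 := by
      refine le_antisymm (le_trans (measure_mono ?_) (hslice (x - L)).le) zero_le
      rintro z ⟨⟨⟨s, τ⟩, ⟨⟨hs1, hs2⟩, hτ⟩, hz1⟩, ⟨⟨s', τ'⟩, ⟨⟨hs'1, hs'2⟩, hτ'⟩, hz2⟩⟩
      have hmem1 : (s, τ) ∈ Set.Icc (-L) (α + L) ×ˢ T₀ :=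
        Set.mk_mem_prod ⟨by linarith, by linarith⟩ hτ
      have hmem2 : (s', τ') ∈ Set.Icc (-L) (α + L) ×ˢ T₀ :=
        Set.mk_mem_prod ⟨by linarith, by linarith⟩ hτ'
      have heq := hinj hmem1 hmem2 (hz1.trans hz2.symm)
      have hss : s = s' := congrArg Prod.fst heq
      have hsx : s = x - L := le_antisymm hs2 (hss ▸ hs'1)
      exact ⟨(s, τ), Set.mk_mem_prod ⟨hsx.ge, hsx.le⟩ hτ, hz1⟩
    have hmui := measure_union_add_inter (μ := m₁) (S (-L) (x - L)) hm2'
    rw [hcap, add_zero] at hmui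
    have htrans2 : m₁ (S (x - L) (x + y - L)) = m₁ (S (-L) (y - L)) := by
      have himg := htr x (-L) (y - L)
      have harg : S (-L + x) (y - L + x) = S (x - L) (x + y - L) := by
        rw [show -L + x = x - L by ring, show y - L + x = x + y - L by ring]
      rw [harg] at himg
      rw [← himg, hminv' x _ (hmeasS (-L) (y - L) le_rfl (by linarith))]
    rw [hsplit, hmui, htrans2]
  -- real-valued length function
  set g : ℝ → ℝ := fun t => (m₁ (S (-L) (t - L))).toReal with hg
  have gnn : ∀ t, 0 ≤ g t := fun t => ENNReal.toReal_nonneg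
  have gadd : ∀ x y, 0 ≤ x → 0 ≤ y → x + y ≤ α + 2 * L → g (x + y) = g x + g y := by
    intro x y hx hy hxy
    simp only [hg]
    rw [Gadd x y hx hy hxy, ENNReal.toReal_add (measure_ne_top _ _) (measure_ne_top _ _)]
  have hkey : g (2 * L) ≤ (2 * L / α) * g α := lin_bound g α L hα hL gnn gadd
  -- m₁ B = g α
  have hB_eq : (m₁ (S 0 α)).toReal = g α := by
    have himg := htr L (-L) (α - L)
    rw [show -L + L = 0 by ring, show α - L + L = α by ring] at himg
    simp only [hg]
    rw [← himg, hminv' L _ (hmeasS (-L) (α - L) le_rfl (by linarith))]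
  -- the closed set Δ
  have hΔclosed : IsClosed (flowDelta φ L) := by
    have heq : flowDelta φ L =
        (fun q : ℝ × Z => (q.2, φ q.1 q.2)) '' (Set.Icc (-L) L ×ˢ (Set.univ : Set Z)) := by
      ext ⟨x₁, x₂⟩
      simp only [flowDelta, Set.mem_setOf_eq, Set.mem_image, Set.mem_prod, Set.mem_Icc,
        Set.mem_univ, and_true, Prod.exists, Prod.mk.injEq]
      constructor
      · rintro ⟨l, hl, hx⟩; exact ⟨l, x₁, hl, rfl, hx.symm⟩
      · rintro ⟨l, y, hl, rfl, h2⟩; exact ⟨l, hl, h2.symm⟩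
    rw [heq]
    exact ((isCompact_Icc.prod isCompact_univ).image
      (continuous_snd.prodMk φ.cont')).isClosed
  -- M is concentrated on Δ
  haveI : SecondCountableTopology (Z × Z) := inferInstance
  have hMnull : M (flowDelta φ L)ᶜ = 0 := by
    apply measure_null_of_locally_null
    intro x hx
    have hxn : x ∉ measureSupport M := fun h => hx (hMsupp h)
    simp only [measureSupport, Set.mem_setOf_eq, not_forall] at hxn
    obtain ⟨U, hU, hxU, hMU⟩ := hxn
    exact ⟨U, nhdsWithin_le_nhds (hU.mem_nhds hxU), not_not.mp hMU⟩
  have hMrestr : ∀ s : Set (Z × Z), M s = M (s ∩ flowDelta φ L) := by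
    intro s
    refine le_antisymm ?_ (measure_mono Set.inter_subset_left)
    calc M s ≤ M ((s ∩ flowDelta φ L) ∪ (flowDelta φ L)ᶜ) := by
          refine measure_mono fun x hx => ?_
          by_cases h : x ∈ flowDelta φ L
          exacts [Or.inl ⟨hx, h⟩, Or.inr h]
      _ ≤ M (s ∩ flowDelta φ L) + M (flowDelta φ L)ᶜ := measure_union_le _ _
      _ = M (s ∩ flowDelta φ L) := by rw [hMnull, add_zero]
  -- measurable boxes
  have hBmeas : MeasurableSet (S 0 α) := hmeasS 0 α (by linarith) (by linarith)
  have hBplusmeas : MeasurableSet (S (-L) (α + L)) := hmeasS _ _ le_rfl le_rfl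
  have hBminusmeas : MeasurableSet (S L (α - L)) := hmeasS _ _ (by linarith) (by linarith)
  have hm1 : ∀ A : Set Z, MeasurableSet A → m₁ A = M (Prod.fst ⁻¹' A) := by
    intro A hA
    rw [← hMfst, Measure.map_apply measurable_fst hA]
  have hm2B : m₂ (S 0 α) = M (Prod.snd ⁻¹' S 0 α) := by
    rw [← hMsnd, Measure.map_apply measurable_snd hBmeas]
  -- upper bound: m₂ B ≤ m₁ B⁺
  have hupper : m₂ (S 0 α) ≤ m₁ (S (-L) (α + L)) := by
    rw [hm2B, hm1 _ hBplusmeas, hMrestr (Prod.snd ⁻¹' S 0 α)]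
    refine measure_mono ?_
    rintro ⟨x₁, x₂⟩ ⟨hx2, l, hl, hx⟩
    have hx' : x₂ = φ l x₁ := hx
    obtain ⟨⟨s, τ⟩, ⟨⟨hs1, hs2⟩, hτ⟩, hFx⟩ := hx2
    have hFx' : F (s, τ) = x₂ := hFx
    have hx1 : x₁ = φ (s - l) τ := by
      have h1 : φ (-l) x₂ = x₁ := by
        rw [hx', ← φ.map_add, neg_add_cancel, φ.map_zero_apply]
      rw [← h1, ← hFx']
      show φ (-l) (φ s τ) = φ (s - l) τ
      rw [← φ.map_add]; congr 1; ring
    exact ⟨(s - l, τ), Set.mk_mem_prod ⟨by cases hl with | intro h1 h2 => linarith,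
      by cases hl with | intro h1 h2 => linarith⟩ hτ, hx1.symm⟩
  -- lower bound: m₁ B⁻ ≤ m₂ B
  have hlower : m₁ (S L (α - L)) ≤ m₂ (S 0 α) := by
    rw [hm2B, hm1 _ hBminusmeas, hMrestr (Prod.fst ⁻¹' S L (α - L))]
    refine measure_mono ?_
    rintro ⟨x₁, x₂⟩ ⟨hx1, l, hl, hx⟩
    have hx' : x₂ = φ l x₁ := hx
    obtain ⟨⟨s, τ⟩, ⟨⟨hs1, hs2⟩, hτ⟩, hFx⟩ := hx1
    have hFx' : F (s, τ) = x₁ := hFx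
    have hx2 : x₂ = φ (l + s) τ := by
      rw [hx', ← hFx']
      show φ l (φ s τ) = φ (l + s) τ
      rw [← φ.map_add]
    exact ⟨(l + s, τ), Set.mk_mem_prod ⟨by cases hl with | intro h1 h2 => linarith,
      by cases hl with | intro h1 h2 => linarith⟩ hτ, hx2.symm⟩
  -- convert to reals
  have hBplus_val : (m₁ (S (-L) (α + L))).toReal = g (α + 2 * L) := by
    simp only [hg]
    rw [show α + 2 * L - L = α + L by ring]
  have hsum : g (α + 2 * L) = g α + g (2 * L) :=
    gadd α (2 * L) hα.le (by linarith) le_rfl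
  set b1 := (m₁ (S 0 α)).toReal with hb1
  set b2 := (m₂ (S 0 α)).toReal with hb2
  have hkey' : g (2 * L) ≤ 2 * L / α * b1 := by rw [hB_eq]; exact hkey
  have hub : b2 ≤ b1 + g (2 * L) := by
    have := ENNReal.toReal_mono (measure_ne_top _ _) hupper
    rw [hBplus_val, hsum, ← hB_eq] at this
    exact this
  have hlb : b1 - b2 ≤ (2 * L / α) * b1 := by
    rcases le_or_gt (2 * L) α with hcase | hcase
    · -- α ≥ 2L : use B⁻
      have hBminus_val : (m₁ (S L (α - L))).toReal = g (α - 2 * L) := by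
        have himg := htr (2 * L) (-L) (α - 3 * L)
        rw [show -L + 2 * L = L by ring, show α - 3 * L + 2 * L = α - L by ring] at himg
        simp only [hg]
        rw [show α - 2 * L - L = α - 3 * L by ring, ← himg,
          hminv' (2 * L) _ (hmeasS (-L) (α - 3 * L) le_rfl (by linarith))]
      have hsum2 : g α = g (α - 2 * L) + g (2 * L) := by
        have := gadd (α - 2 * L) (2 * L) (by linarith) (by linarith) (by linarith)
        rw [show α - 2 * L + 2 * L = α by ring] at this
        exact this
      have hlo := ENNReal.toReal_mono (measure_ne_top _ _) hlower
      rw [hBminus_val] at hlo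
      rw [← hb2] at hlo
      have hb2nn : 0 ≤ b2 := ENNReal.toReal_nonneg
      linarith [hkey', hB_eq, hsum2, hlo]
    · -- α < 2L : trivial bound
      have h1 : (1:ℝ) ≤ 2 * L / α := by
        rw [le_div_iff₀ hα]; linarith
      have hb1nn : 0 ≤ b1 := ENNReal.toReal_nonneg
      have hb2nn : 0 ≤ b2 := ENNReal.toReal_nonneg
      nlinarith
  rw [abs_sub_le_iff]
  exact ⟨by linarith [hkey', hub], hlb⟩
end

section
/- Let Z be a compact metrizable space, φ a continuous flow on Z, α > 0, and let T₀ ⊆ Z be a Borel set such that the map (s, τ) ↦ φ(s, τ) is injective on [0, α] × T₀. Let m be a φ-invariant Borel probability measure on Z. Then for all 0 ≤ a ≤ b ≤ α, m(φ([a, b] × T₀)) = ((b − a)/α) · m(φ([0, α] × T₀)). -/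
open MeasureTheory Set
open scoped ENNReal

/-- invariant measures are proportional to length in flow boxes:
let `φ` be a continuous flow on a compact metrizable space `Z`, `α > 0`, and let `T₀` be a
Borel set such that `(s,τ) ↦ φ(s,τ)` is injective on `[0,α] × T₀`. If `m` is a
`φ`-invariant Borel probability measure, then for all `0 ≤ a ≤ b ≤ α`,
`m(φ([a,b] × T₀)) = ((b−a)/α)·m(φ([0,α] × T₀))`. -/
theorem stmt_9 {Z : Type*} [TopologicalSpace Z] [CompactSpace Z]
    [TopologicalSpace.MetrizableSpace Z] [MeasurableSpace Z] [BorelSpace Z]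
    (φ : Flow ℝ Z) (α : ℝ) (hα : 0 < α)
    (T₀ : Set Z) (hT₀ : MeasurableSet T₀)
    (hinj : Set.InjOn (fun p : ℝ × Z => φ p.1 p.2) (Set.Icc 0 α ×ˢ T₀))
    (m : Measure Z) [IsProbabilityMeasure m]
    (hminv : ∀ t : ℝ, m.map (fun z => φ t z) = m)
    (a b : ℝ) (ha : 0 ≤ a) (hab : a ≤ b) (hb : b ≤ α) :
    (m ((fun p : ℝ × Z => φ p.1 p.2) '' (Set.Icc a b ×ˢ T₀))).toReal =
      ((b - a) / α) * (m ((fun p : ℝ × Z => φ p.1 p.2) '' (Set.Icc 0 α ×ˢ T₀))).toReal := by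
  letI : MetricSpace Z := TopologicalSpace.metrizableSpaceMetric Z
  set Φ : ℝ × Z → Z := fun p => φ p.1 p.2 with hΦdef
  have hΦc : Continuous Φ := φ.continuous continuous_fst continuous_snd
  -- measurability of flow boxes
  have hbox : ∀ s t : ℝ, 0 ≤ s → t ≤ α → MeasurableSet (Φ '' (Icc s t ×ˢ T₀)) := by
    intro s t hs ht
    have hsub : (Icc s t ×ˢ T₀ : Set (ℝ × Z)) ⊆ Icc 0 α ×ˢ T₀ := fun p hp =>
      ⟨⟨hs.trans hp.1.1, hp.1.2.trans ht⟩, hp.2⟩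
    exact (measurableSet_Icc.prod hT₀).image_of_continuousOn_injOn
      hΦc.continuousOn (hinj.mono hsub)
  -- invariance of the measure of measurable sets under the flow maps
  have hmapim : ∀ (t : ℝ) (A : Set Z), MeasurableSet A → m (φ t '' A) = m A := by
    intro t A hA
    have hAm : MeasurableSet (φ t '' A) :=
      ((φ.toHomeomorph t).measurableEmbedding.measurableSet_image).mpr hA
    calc m (φ t '' A) = (m.map (fun z => φ t z)) (φ t '' A) := by rw [hminv t]
      _ = m ((fun z => φ t z) ⁻¹' (φ t '' A)) :=
          Measure.map_apply (φ.continuous_toFun t).measurable hAm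
      _ = m A := congrArg m (Set.preimage_image_eq A (φ.toHomeomorph t).injective)
  -- shifting a flow box in time
  have hshiftset : ∀ t s u : ℝ, φ t '' (Φ '' (Icc s u ×ˢ T₀)) = Φ '' (Icc (t + s) (t + u) ×ˢ T₀) := by
    intro t s u
    ext z
    simp only [Set.mem_image, Set.mem_prod, Set.mem_Icc, hΦdef, Prod.exists]
    constructor
    · rintro ⟨_, ⟨r, τ, ⟨⟨hr1, hr2⟩, hτ⟩, rfl⟩, rfl⟩
      exact ⟨t + r, τ, ⟨⟨by linarith, by linarith⟩, hτ⟩, φ.map_add t r τ⟩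
    · rintro ⟨r, τ, ⟨⟨hr1, hr2⟩, hτ⟩, rfl⟩
      refine ⟨φ (r - t) τ, ⟨r - t, τ, ⟨⟨by linarith, by linarith⟩, hτ⟩, rfl⟩, ?_⟩
      rw [← φ.map_add]; congr 1; ring
  have hmshift : ∀ t s u : ℝ, 0 ≤ s → u ≤ α →
      m (Φ '' (Icc (t + s) (t + u) ×ˢ T₀)) = m (Φ '' (Icc s u ×ˢ T₀)) := by
    intro t s u hs hu
    rw [← hshiftset, hmapim t _ (hbox s u hs hu)]
  -- single slices are null
  have hzero : m (Φ '' (Icc (0:ℝ) 0 ×ˢ T₀)) = 0 := by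
    set s₀ := m (Φ '' (Icc (0:ℝ) 0 ×ˢ T₀)) with hs₀
    have key : ∀ n : ℕ, (n + 1 : ℝ≥0∞) * s₀ ≤ 1 := by
      intro n
      set c : ℕ → ℝ := fun k => α * k / (n + 1) with hc
      have hcmem : ∀ k : ℕ, k ≤ n → 0 ≤ c k ∧ c k ≤ α := by
        intro k hk
        constructor
        · positivity
        · rw [hc]
          rw [div_le_iff₀ (by positivity)]
          have : (k:ℝ) ≤ n + 1 := by
            have : (k:ℝ) ≤ n := by exact_mod_cast hk
            linarith
          nlinarith
      set A : ℕ → Set Z := fun k => Φ '' (Icc (c k) (c k) ×ˢ T₀) with hA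
      have hmeasA : ∀ k ∈ Finset.range (n+1), MeasurableSet (A k) := by
        intro k hk
        rw [Finset.mem_range] at hk
        have := hcmem k (by omega)
        exact hbox _ _ this.1 this.2
      have hmA : ∀ k ∈ Finset.range (n+1), m (A k) = s₀ := by
        intro k hk
        have := hmshift (c k) 0 0 le_rfl hα.le
        simpa only [add_zero] using this
      have hdisj : (↑(Finset.range (n+1)) : Set ℕ).PairwiseDisjoint A := by
        intro k hk j hj hkj
        simp only [Finset.coe_range, Set.mem_Iio] at hk hj
        rw [Function.onFun, Set.disjoint_left]
        rintro z ⟨⟨r, τ⟩, ⟨hr, hτ⟩, rfl⟩ ⟨⟨r', τ'⟩, ⟨hr', hτ'⟩, hz⟩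
        simp only [Set.mem_Icc, Icc_self, Set.mem_singleton_iff] at hr hr'
        have hck := hcmem k (by omega)
        have hcj := hcmem j (by omega)
        have h1 : ((r, τ) : ℝ × Z) ∈ Icc (0:ℝ) α ×ˢ T₀ := by
          constructor
          · simp only [Set.mem_Icc]; rw [hr]; exact ⟨hck.1, hck.2⟩
          · exact hτ
        have h2 : ((r', τ') : ℝ × Z) ∈ Icc (0:ℝ) α ×ˢ T₀ := by
          constructor
          · simp only [Set.mem_Icc]; rw [hr']; exact ⟨hcj.1, hcj.2⟩
          · exact hτ'
        have := hinj h2 h1 hz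
        have hrr : c j = c k := by
          have := congrArg Prod.fst this
          simp only at this
          rw [← hr, ← hr', this]
        have : (j:ℝ) = k := by
          rw [hc] at hrr
          rw [div_left_inj' (by positivity), mul_right_inj' hα.ne'] at hrr
          exact_mod_cast hrr
        exact hkj (by exact_mod_cast this.symm)
      have hsum : ∑ k ∈ Finset.range (n+1), m (A k) = m (⋃ k ∈ Finset.range (n+1), A k) :=
        (measure_biUnion_finset hdisj (fun k hk => hmeasA k hk)).symm
      calc (n + 1 : ℝ≥0∞) * s₀ = ∑ k ∈ Finset.range (n+1), m (A k) := by
            rw [Finset.sum_congr rfl hmA, Finset.sum_const, Finset.card_range, nsmul_eq_mul]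
            norm_cast
        _ = m (⋃ k ∈ Finset.range (n+1), A k) := hsum
        _ ≤ m Set.univ := measure_mono (Set.subset_univ _)
        _ = 1 := measure_univ
    by_contra h
    obtain ⟨n, hn⟩ := ENNReal.exists_inv_nat_lt h
    have h1 : (1 : ℝ≥0∞) ≤ (n : ℝ≥0∞) * s₀ := by
      rcases Nat.eq_zero_or_pos n with rfl | hn0
      · exfalso
        have hlt : s₀ < ⊤ := measure_lt_top m _
        simp only [Nat.cast_zero, ENNReal.inv_zero] at hn
        exact lt_irrefl _ (hn.trans hlt)
      · have hle : ((n:ℝ≥0∞))⁻¹ ≤ s₀ := hn.le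
        calc (1:ℝ≥0∞) = (n:ℝ≥0∞) * (n:ℝ≥0∞)⁻¹ := by
              rw [ENNReal.mul_inv_cancel (by exact_mod_cast hn0.ne') (by simp)]
          _ ≤ (n:ℝ≥0∞) * s₀ := by gcongr
    have h2 : (n + 1 : ℝ≥0∞) * s₀ ≤ 1 := key n
    have h3 : (n : ℝ≥0∞) * s₀ + s₀ ≤ 1 := by
      calc (n : ℝ≥0∞) * s₀ + s₀ = (n + 1 : ℝ≥0∞) * s₀ := by ring
        _ ≤ 1 := h2
    have h4 : (1:ℝ≥0∞) + s₀ ≤ 1 + 0 := by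
      simpa using le_trans (add_le_add_left h1 s₀) h3
    have h5 : s₀ ≤ 0 := (ENNReal.add_le_add_iff_left (by simp)).mp h4
    exact h (le_zero_iff.mp h5)
  -- splitting a flow box at an intermediate time
  have hsplit : ∀ u v w : ℝ, 0 ≤ u → u ≤ v → v ≤ w → w ≤ α →
      m (Φ '' (Icc u w ×ˢ T₀)) = m (Φ '' (Icc u v ×ˢ T₀)) + m (Φ '' (Icc v w ×ˢ T₀)) := by
    intro u v w hu huv hvw hw
    have hB := hbox v w (hu.trans huv) hw
    have hsub1 : (Icc u v ×ˢ T₀ : Set (ℝ × Z)) ⊆ Icc 0 α ×ˢ T₀ := fun p hp =>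
      ⟨⟨hu.trans hp.1.1, hp.1.2.trans (hvw.trans hw)⟩, hp.2⟩
    have hsub2 : (Icc v w ×ˢ T₀ : Set (ℝ × Z)) ⊆ Icc 0 α ×ˢ T₀ := fun p hp =>
      ⟨⟨(hu.trans huv).trans hp.1.1, hp.1.2.trans hw⟩, hp.2⟩
    have himun : Φ '' (Icc u w ×ˢ T₀) = Φ '' (Icc u v ×ˢ T₀) ∪ Φ '' (Icc v w ×ˢ T₀) := by
      rw [← Set.image_union, ← Set.union_prod, Icc_union_Icc_eq_Icc huv hvw]
    have hinter : Φ '' (Icc u v ×ˢ T₀) ∩ Φ '' (Icc v w ×ˢ T₀) = Φ '' (Icc v v ×ˢ T₀) := by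
      rw [← hinj.image_inter hsub1 hsub2]
      congr 1
      rw [Set.prod_inter_prod, Set.inter_self, Set.Icc_inter_Icc,
        max_eq_right huv, min_eq_left hvw]
    have hnullv : m (Φ '' (Icc v v ×ˢ T₀)) = 0 := by
      have := hmshift v 0 0 le_rfl hα.le
      simp only [add_zero] at this
      rw [this, hzero]
    have hkey := measure_union_add_inter (μ := m) (Φ '' (Icc u v ×ˢ T₀)) hB
    rw [hinter, hnullv, add_zero] at hkey
    rw [himun, hkey]
  -- the length function
  set f : ℝ → ℝ := fun t => (m (Φ '' (Icc 0 t ×ˢ T₀))).toReal with hfdef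
  have hf0 : f 0 = 0 := by rw [hfdef]; simp only; rw [hzero]; simp
  have hfmono : ∀ s t : ℝ, s ≤ t → f s ≤ f t := by
    intro s t h
    apply ENNReal.toReal_mono (measure_ne_top m _)
    exact measure_mono (Set.image_mono (Set.prod_mono_left (Set.Icc_subset_Icc_right h)))
  have hfadd : ∀ s t : ℝ, 0 ≤ s → 0 ≤ t → s + t ≤ α → f (s + t) = f s + f t := by
    intro s t hs ht hst
    have h1 := hsplit 0 s (s+t) le_rfl hs (by linarith) hst
    have h2 : m (Φ '' (Icc s (s+t) ×ˢ T₀)) = m (Φ '' (Icc 0 t ×ˢ T₀)) := by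
      have := hmshift s 0 t le_rfl (by linarith)
      simpa using this
    rw [hfdef]; simp only
    rw [h1, h2, ENNReal.toReal_add (measure_ne_top m _) (measure_ne_top m _)]
  have hfnat : ∀ (n : ℕ) (t : ℝ), 0 ≤ t → (n:ℝ) * t ≤ α → f ((n:ℝ) * t) = n * f t := by
    intro n
    induction n with
    | zero => intro t ht h; simpa using hf0
    | succ n ih =>
      intro t ht h
      have hcast : ((n+1 : ℕ):ℝ) = (n:ℝ) + 1 := by push_cast; ring
      have hn : (n:ℝ) * t ≤ α := by nlinarith [hcast ▸ h]
      rw [hcast, show ((n:ℝ)+1) * t = (n:ℝ)*t + t by ring,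
        hfadd ((n:ℝ)*t) t (by positivity) ht (by nlinarith [hcast ▸ h]), ih t ht hn]
      push_cast; ring
  have hfα_nonneg : 0 ≤ f α := ENNReal.toReal_nonneg
  have hfrac : ∀ k n : ℕ, 0 < n → k ≤ n → f ((k:ℝ) * (α/n)) = ((k:ℝ)/(n:ℝ)) * f α := by
    intro k n hn hk
    have hn' : (0:ℝ) < n := by exact_mod_cast hn
    have hαn : 0 ≤ α / n := by positivity
    have hle : (k:ℝ) * (α/n) ≤ α := by
      have hk' : (k:ℝ) ≤ n := by exact_mod_cast hk
      calc (k:ℝ) * (α/n) ≤ (n:ℝ) * (α/n) := by gcongr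
        _ = α := by field_simp
    have h1 := hfnat k (α/n) hαn hle
    have h2 : f α = n * f (α/n) := by
      have := hfnat n (α/n) hαn (by rw [mul_div_cancel₀ α hn'.ne']; )
      rw [mul_div_cancel₀ α hn'.ne'] at this
      exact this
    rw [h1, h2]; field_simp
  have hrat : ∀ r : ℚ, 0 ≤ r → r ≤ 1 → f ((r:ℝ) * α) = (r:ℝ) * f α := by
    intro r hr0 hr1
    have hnum : 0 ≤ r.num := Rat.num_nonneg.mpr hr0
    set k := r.num.toNat with hk
    have hcast : ((k:ℕ):ℝ) = (r.num : ℝ) := by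
      rw [hk]; exact_mod_cast Int.toNat_of_nonneg hnum
    have hkd : ((k:ℕ):ℝ)/(r.den:ℝ) = (r:ℝ) := by
      rw [hcast, ← Rat.cast_def]
    have hden : (0:ℝ) < r.den := by exact_mod_cast r.pos
    have hk_le : k ≤ r.den := by
      have h1 : (r:ℝ) ≤ 1 := by exact_mod_cast hr1
      rw [← hkd, div_le_one hden] at h1
      exact_mod_cast h1
    have h := hfrac k r.den r.pos hk_le
    rw [hkd, show ((k:ℕ):ℝ) * (α/(r.den:ℝ)) = (r:ℝ) * α by rw [← hkd]; ring] at h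
    exact h
  have hlin : ∀ x : ℝ, 0 ≤ x → x ≤ 1 → f (x * α) = x * f α := by
    intro x hx0 hx1
    apply le_antisymm
    · apply le_of_forall_pos_le_add
      intro ε hε
      rcases eq_or_lt_of_le hx1 with rfl | hx1'
      · simp only [one_mul]; linarith
      · set δ := ε / (f α + 1) with hδ
        have hδpos : 0 < δ := by positivity
        obtain ⟨r, hr1, hr2⟩ := exists_rat_btwn (show x < min 1 (x + δ) by
          simp only [lt_min_iff]; exact ⟨hx1', by linarith⟩)
        have hr0 : (0:ℚ) ≤ r := by
          have : (0:ℝ) < r := lt_of_le_of_lt hx0 hr1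
          exact_mod_cast this.le
        have hrle1 : r ≤ 1 := by
          have : (r:ℝ) < 1 := lt_of_lt_of_le hr2 (min_le_left _ _)
          exact_mod_cast this.le
        have h1 : f (x * α) ≤ f ((r:ℝ) * α) := hfmono _ _ (by nlinarith)
        rw [hrat r hr0 hrle1] at h1
        have h2 : (r:ℝ) < x + δ := lt_of_lt_of_le hr2 (min_le_right _ _)
        have h3 : δ * f α ≤ ε := by
          rw [hδ]; rw [div_mul_eq_mul_div, div_le_iff₀ (by positivity)]
          nlinarith
        nlinarith
    · apply le_of_forall_pos_le_add
      intro ε hε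
      rcases eq_or_lt_of_le hx0 with rfl | hx0'
      · simp only [zero_mul]
        have := hfmono 0 (0 * α) (by simp)
        nlinarith [hfmono (0:ℝ) (0 * α) (by simp), hf0,
          ENNReal.toReal_nonneg (a := m (Φ '' (Icc 0 (0 * α) ×ˢ T₀)))]
      · set δ := ε / (f α + 1) with hδ
        have hδpos : 0 < δ := by positivity
        obtain ⟨r, hr1, hr2⟩ := exists_rat_btwn (show max 0 (x - δ) < x by
          simp only [max_lt_iff]; exact ⟨hx0', by linarith⟩)
        have hr0 : (0:ℚ) ≤ r := by
          have : (0:ℝ) < r := lt_of_le_of_lt (le_max_left _ _) hr1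
          exact_mod_cast this.le
        have hrle1 : r ≤ 1 := by
          have : (r:ℝ) < 1 := lt_of_lt_of_le hr2 hx1
          exact_mod_cast this.le
        have h1 : f ((r:ℝ) * α) ≤ f (x * α) := hfmono _ _ (by nlinarith)
        rw [hrat r hr0 hrle1] at h1
        have h2 : x - δ < (r:ℝ) := lt_of_le_of_lt (le_max_right _ _) hr1
        have h3 : δ * f α ≤ ε := by
          rw [hδ]; rw [div_mul_eq_mul_div, div_le_iff₀ (by positivity)]
          nlinarith
        nlinarith
  -- conclusion
  have hx0 : 0 ≤ (b - a) / α := div_nonneg (by linarith) hα.le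
  have hx1 : (b - a) / α ≤ 1 := by rw [div_le_one hα]; linarith
  have hmain := hlin ((b - a) / α) hx0 hx1
  rw [div_mul_cancel₀ _ hα.ne'] at hmain
  have hsh := hmshift a 0 (b - a) le_rfl (by linarith)
  rw [show a + 0 = a from add_zero a, show a + (b - a) = b by ring] at hsh
  calc (m (Φ '' (Icc a b ×ˢ T₀))).toReal = f (b - a) := by rw [hfdef]; simp only; rw [hsh]
    _ = ((b - a) / α) * f α := hmain
end

section
/- Let G be a locally compact, second-countable Hausdorff topological group, K a compact subgroup of G, and m_K the Haar probability measure of K (viewed as a measure on G supported on K). Let L be a subgroup of G such that every g ∈ G can be written g = σ_L(g)·σ_K(g) for Borel measurable maps σ_L : G → G and σ_K : G → G with σ_L(g) ∈ L and σ_K(g) ∈ K for all g. Let m_G be a Borel probability measure on G that is right K-invariant, i.e. the pushforward of m_G under right multiplication by any k ∈ K equals m_G. Let f : G → ℝ be a bounded Borel function that is left L-invariant, i.e. f(l·g) = f(g) for all l ∈ L and g ∈ G. Define F : G → ℝ by F(g) := ∫_K f(k·g) dm_K(k). Then F is left m_G-harmonic: for every g ∈ G, ∫_G F(h·g) dm_G(h)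 = F(g). -/
open MeasureTheory

/-- Lemma on harmonicity of `K`-averages of left `L`-invariant
functions: let `G` be a locally compact second-countable Hausdorff topological group,
`K` a compact subgroup with Haar probability measure `m_K` (viewed as a measure on `G`
supported on `K`), and `L` a subgroup such that `G = LK` with Borel measurable section
maps `σ_L, σ_K`. If `m_G` is a right `K`-invariant Borel probability measure on `G` and
`f : G → ℝ` is a bounded Borel function which is left `L`-invariant, then
`F(g) := ∫_K f(k·g) dm_K(k)` is left `m_G`-harmonic: `∫ F(h·g) dm_G(h) = F(g)`. -/
theorem stmt_10 {G : Type*} [Group G] [TopologicalSpace G] [IsTopologicalGroup G]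
    [LocallyCompactSpace G] [SecondCountableTopology G] [T2Space G]
    [MeasurableSpace G] [BorelSpace G]
    (K L : Subgroup G) (hKcomp : IsCompact (K : Set G))
    (m_K : Measure G) [IsProbabilityMeasure m_K]
    (hKsupp : m_K ((K : Set G)ᶜ) = 0)
    (hKleft : ∀ k ∈ K, m_K.map (fun g => k * g) = m_K)
    (hKright : ∀ k ∈ K, m_K.map (fun g => g * k) = m_K)
    (σL σK : G → G) (hσL : Measurable σL) (hσK : Measurable σK)
    (hdecomp : ∀ g : G, σL g ∈ L ∧ σK g ∈ K ∧ g = σL g * σK g)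
    (m_G : Measure G) [IsProbabilityMeasure m_G]
    (hmG : ∀ k ∈ K, m_G.map (fun g => g * k) = m_G)
    (f : G → ℝ) (hf : Measurable f) (C : ℝ) (hfbdd : ∀ g, |f g| ≤ C)
    (hfinv : ∀ l ∈ L, ∀ g, f (l * g) = f g) :
    ∀ g : G, (∫ h, (∫ k, f (k * (h * g)) ∂m_K) ∂m_G) = ∫ k, f (k * g) ∂m_K := by

  intro g
  set F : G → ℝ := fun x => ∫ k, f (k * x) ∂m_K with hF
  have hFsm : StronglyMeasurable F := by
    have : StronglyMeasurable (fun p : G × G => f (p.2 * p.1)) :=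
      (hf.comp (measurable_snd.mul measurable_fst)).stronglyMeasurable
    exact this.integral_prod_right'
  have hFm : Measurable F := hFsm.measurable
  have hFbdd : ∀ x, |F x| ≤ C := by
    intro x
    have h1 : ‖∫ k, f (k * x) ∂m_K‖ ≤ C * (m_K Set.univ).toReal :=
      norm_integral_le_of_norm_le_const
        (Filter.Eventually.of_forall fun k => by simpa [Real.norm_eq_abs] using hfbdd (k * x))
    simpa [Real.norm_eq_abs] using h1
  have haeK : ∀ᵐ k ∂m_K, k ∈ K := by
    rw [MeasureTheory.ae_iff]
    exact hKsupp
  -- Step A: use right K-invariance of m_G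
  have keyA : ∀ᵐ k' ∂m_K, (∫ h, F (h * (k' * g)) ∂m_G) = ∫ h, F (h * g) ∂m_G := by
    filter_upwards [haeK] with k' hk'
    have h1 : m_G.map (fun x => x * k') = m_G := hmG k' hk'
    have e1 : ∫ h, F (h * g) ∂(m_G.map (fun x => x * k')) = ∫ x, F ((x * k') * g) ∂m_G :=
      integral_map (measurable_mul_const k').aemeasurable
        (by rw [h1]; exact (hFm.comp (measurable_mul_const g)).aestronglyMeasurable)
    calc ∫ h, F (h * (k' * g)) ∂m_G = ∫ x, F ((x * k') * g) ∂m_G := by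
            simp only [mul_assoc]
      _ = ∫ h, F (h * g) ∂(m_G.map (fun x => x * k')) := e1.symm
      _ = ∫ h, F (h * g) ∂m_G := by rw [h1]
  have stepA : (∫ h, F (h * g) ∂m_G) = ∫ k', (∫ h, F (h * (k' * g)) ∂m_G) ∂m_K := by
    rw [integral_congr_ae keyA]
    simp
  -- Step B: Fubini
  have stepB : (∫ k', (∫ h, F (h * (k' * g)) ∂m_G) ∂m_K)
      = ∫ h, (∫ k', F (h * (k' * g)) ∂m_K) ∂m_G := by
    apply integral_integral_swap
    apply Integrable.mono' (integrable_const C)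
    · exact (hFm.comp (measurable_snd.mul (measurable_fst.mul_const g))).aestronglyMeasurable
    · exact Filter.Eventually.of_forall fun z => by
        simpa [Real.norm_eq_abs, Function.uncurry] using hFbdd (z.2 * (z.1 * g))
  -- Step C: inner integral equals F g
  have stepC : ∀ h : G, (∫ k', F (h * (k' * g)) ∂m_K) = F g := by
    intro h
    have swap2 : (∫ k', (∫ k'', f (k'' * (h * (k' * g))) ∂m_K) ∂m_K)
        = ∫ k'', (∫ k', f (k'' * (h * (k' * g))) ∂m_K) ∂m_K := by
      apply integral_integral_swap
      apply Integrable.mono' (integrable_const C)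
      · exact (hf.comp (measurable_snd.mul
          (measurable_const.mul (measurable_fst.mul_const g)))).aestronglyMeasurable
      · exact Filter.Eventually.of_forall fun z => by
          simpa [Real.norm_eq_abs, Function.uncurry] using hfbdd (z.2 * (h * (z.1 * g)))
    have inner : ∀ᵐ k'' ∂m_K, (∫ k', f (k'' * (h * (k' * g))) ∂m_K) = F g := by
      filter_upwards [haeK] with k'' hk''
      obtain ⟨hL, hKmem, heq⟩ := hdecomp (k'' * h)
      set c := σK (k'' * h) with hc
      have hrw : ∀ k' : G, f (k'' * (h * (k' * g))) = f ((c * k') * g) := by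
        intro k'
        have : k'' * (h * (k' * g)) = σL (k'' * h) * (c * (k' * g)) := by
          conv_lhs => rw [← mul_assoc, heq, mul_assoc]
        rw [this, hfinv _ hL, ← mul_assoc]
      have hmap : m_K.map (fun x => c * x) = m_K := hKleft c hKmem
      have e2 : ∫ x, f (x * g) ∂(m_K.map (fun x => c * x)) = ∫ k', f ((c * k') * g) ∂m_K :=
        integral_map (measurable_const_mul c).aemeasurable
          (by rw [hmap]; exact (hf.comp (measurable_mul_const g)).aestronglyMeasurable)
      calc (∫ k', f (k'' * (h * (k' * g))) ∂m_K) = ∫ k', f ((c * k') * g) ∂m_K := by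
              simp only [hrw]
        _ = ∫ x, f (x * g) ∂(m_K.map (fun x => c * x)) := e2.symm
        _ = F g := by rw [hmap]
    calc (∫ k', F (h * (k' * g)) ∂m_K)
        = ∫ k'', (∫ k', f (k'' * (h * (k' * g))) ∂m_K) ∂m_K := swap2
      _ = ∫ _k'', F g ∂m_K := integral_congr_ae inner
      _ = F g := by simp
  calc (∫ h, (∫ k, f (k * (h * g)) ∂m_K) ∂m_G) = ∫ h, F (h * g) ∂m_G := rfl
    _ = ∫ k', (∫ h, F (h * (k' * g)) ∂m_G) ∂m_K := stepA
    _ = ∫ h, (∫ k', F (h * (k' * g)) ∂m_K) ∂m_G := stepB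
    _ = ∫ _h, F g ∂m_G := by exact integral_congr_ae (Filter.Eventually.of_forall stepC)
    _ = F g := by simp
end

section
/- Let Γ be a group with a finite symmetric generating set S containing the identity, let l_S denote the word length on Γ with respect to S, and let m_Γ be a symmetric probability measure on Γ (m_Γ(γ) = m_Γ(γ⁻¹)) satisfying the second-moment condition Σ_{γ∈Γ} l_S(γ)² · m_Γ(γ) < ∞. Fix constants ξ ≥ 1 and δ, Δ > 0. Consider the set 𝒟 of tuples (f_γ)_{γ∈S} of continuous maps ℝ → ℝ for which there exists a group homomorphism ρ from Γ to the group of strictly increasing bijections of ℝ with ρ(γ) = f_γ for every γ ∈ S, satisfying: (1) |ρ(γ)(x) − x| ≤ Δ for every γ ∈ S and every x ∈ ℝ; (2) Σ_{γ∈Γ} (ρ(γ)(x) − x)² · m_Γ(γ) ≥ δ² for every x ∈ ℝ; (3) ρ(γ) is ξ-Lipschitz for every γ ∈ S; (4) Σ_{γ∈Γ} ρ(γ)(x) · m_Γ(γ) = x for every x ∈ ℝ. Then 𝒟 is a compact subset of the space C(ℝ, ℝ)^S of S-indexed tuples of continuous self-maps of ℝ with the product of compact-open topologies. -/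
/-- The word length of `γ` with respect to a generating set `S`: the least `n` such that
`γ` is a product of `n` elements of `S` (`0` for the identity). -/
noncomputable def wordLength {Γ : Type*} [Group Γ] (S : Set Γ) (γ : Γ) : ℕ :=
  sInf {n : ℕ | ∃ f : Fin n → Γ, (∀ i, f i ∈ S) ∧ γ = (List.ofFn f).prod}

open Filter Topology Set

section aux
variable {Γ : Type*} [Group Γ]

lemma mem_monoid_closure (S : Finset Γ) (hSsymm : ∀ γ ∈ S, γ⁻¹ ∈ S)
    (hSgen : Subgroup.closure (S : Set Γ) = ⊤) (γ : Γ) :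
    γ ∈ Submonoid.closure (S : Set Γ) := by
  have h2 : (S : Set Γ) ∪ (S : Set Γ)⁻¹ = (S : Set Γ) := by
    apply Set.union_eq_self_of_subset_right
    intro x hx
    have : x⁻¹ ∈ S := Set.mem_inv.mp hx
    simpa using hSsymm _ this
  have h1 := Subgroup.closure_toSubmonoid (S : Set Γ)
  rw [h2, hSgen] at h1
  have : γ ∈ (⊤ : Subgroup Γ).toSubmonoid := Set.mem_univ γ
  rwa [h1] at this

lemma wordLength_spec (S : Finset Γ) (hSsymm : ∀ γ ∈ S, γ⁻¹ ∈ S)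
    (hSgen : Subgroup.closure (S : Set Γ) = ⊤) (γ : Γ) :
    ∃ f : Fin (wordLength (S : Set Γ) γ) → Γ,
      (∀ i, f i ∈ (S : Set Γ)) ∧ γ = (List.ofFn f).prod := by
  obtain ⟨l, hl, hlp⟩ :=
    Submonoid.exists_list_of_mem_closure (mem_monoid_closure S hSsymm hSgen γ)
  have hne : {n : ℕ | ∃ f : Fin n → Γ, (∀ i, f i ∈ (S : Set Γ)) ∧
      γ = (List.ofFn f).prod}.Nonempty := by
    refine ⟨l.length, l.get, fun i => hl _ (l.get_mem i), ?_⟩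
    rw [List.ofFn_get, hlp]
  exact Nat.sInf_mem hne

lemma displacement_bound {Δ : ℝ} (S : Finset Γ) (hSsymm : ∀ γ ∈ S, γ⁻¹ ∈ S)
    (hSgen : Subgroup.closure (S : Set Γ) = ⊤) (ρ : Γ →* (ℝ ≃o ℝ))
    (h1 : ∀ γ ∈ S, ∀ x : ℝ, |ρ γ x - x| ≤ Δ) (γ : Γ) (x : ℝ) :
    |ρ γ x - x| ≤ Δ * (wordLength (S : Set Γ) γ : ℝ) := by
  have key : ∀ L : List Γ, (∀ s ∈ L, s ∈ S) → ∀ x : ℝ,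
      |ρ L.prod x - x| ≤ Δ * L.length := by
    intro L
    induction L with
    | nil => intro _ x; simp
    | cons s L ih =>
      intro h x
      have hs := h s List.mem_cons_self
      have hL := fun t ht => h t (List.mem_cons_of_mem _ ht)
      have heq : ρ (s :: L).prod x = ρ s (ρ L.prod x) := by
        rw [List.prod_cons, map_mul]; rfl
      rw [heq]
      calc |ρ s (ρ L.prod x) - x|
          ≤ |ρ s (ρ L.prod x) - ρ L.prod x| + |ρ L.prod x - x| := abs_sub_le _ _ _
        _ ≤ Δ + Δ * L.length := add_le_add (h1 s hs _) (ih hL x)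
        _ = Δ * (s :: L).length := by push_cast [List.length_cons]; ring
  obtain ⟨f, hf, hfp⟩ := wordLength_spec S hSsymm hSgen γ
  have := key (List.ofFn f)
    (fun t ht => by
      obtain ⟨i, rfl⟩ := List.mem_ofFn.mp ht
      exact hf i) x
  rw [← hfp] at this
  simpa [List.length_ofFn] using this

end aux

lemma isCompact_lipDisp {ξ Δ : ℝ} (hξ : 1 ≤ ξ) :
    IsCompact {g : C(ℝ, ℝ) | (∀ x : ℝ, |g x - x| ≤ Δ) ∧
      ∀ x y : ℝ, |g x - g y| ≤ ξ * |x - y|} := by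
  set Q : Set (ℝ → ℝ) := {g | (∀ x : ℝ, |g x - x| ≤ Δ) ∧
      ∀ x y : ℝ, |g x - g y| ≤ ξ * |x - y|} with hQ
  apply ArzelaAscoli.isCompact_of_equicontinuous
  · have himg : ContinuousMap.toFun ''
        {g : C(ℝ, ℝ) | (∀ x : ℝ, |g x - x| ≤ Δ) ∧
          ∀ x y : ℝ, |g x - g y| ≤ ξ * |x - y|} = Q := by
      apply Set.Subset.antisymm
      · rintro _ ⟨g, hg, rfl⟩
        exact hg
      · rintro g ⟨hg1, hg2⟩
        have hcont : Continuous g := by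
          have : LipschitzWith ⟨ξ, le_trans zero_le_one hξ⟩ g := by
            apply LipschitzWith.of_dist_le_mul
            intro x y
            rw [Real.dist_eq, Real.dist_eq]
            exact hg2 x y
          exact this.continuous
        exact ⟨⟨g, hcont⟩, ⟨hg1, hg2⟩, rfl⟩
    rw [himg]
    have hQsub : Q ⊆ Set.pi Set.univ fun x => Set.Icc (x - Δ) (x + Δ) := by
      intro g hg x _
      have := hg.1 x
      rw [abs_sub_le_iff] at this
      exact ⟨by linarith [this.1], by linarith [this.2]⟩
    have hQclosed : IsClosed Q := by
      have : Q = (⋂ x : ℝ, {g : ℝ → ℝ | |g x - x| ≤ Δ}) ∩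
          ⋂ x : ℝ, ⋂ y : ℝ, {g : ℝ → ℝ | |g x - g y| ≤ ξ * |x - y|} := by
        ext g
        simp only [hQ, Set.mem_setOf_eq, Set.mem_inter_iff, Set.mem_iInter]
      rw [this]
      refine IsClosed.inter (isClosed_iInter fun x => ?_)
        (isClosed_iInter fun x => isClosed_iInter fun y => ?_)
      · exact isClosed_le (((continuous_apply x).sub continuous_const).abs) continuous_const
      · exact isClosed_le (((continuous_apply x).sub (continuous_apply y)).abs) continuous_const
    exact (isCompact_univ_pi fun x => isCompact_Icc).of_isClosed_subset hQclosed hQsub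
  · apply Metric.equicontinuous_of_continuity_modulus (fun r => ξ * r)
    · have : Tendsto (fun r : ℝ => ξ * r) (nhds 0) (nhds (ξ * 0)) :=
        (continuous_const.mul continuous_id).tendsto 0
      simpa using this
    · intro x y i
      rw [Real.dist_eq, Real.dist_eq]
      exact i.2.2 x y

/-- compactness of the space of normalized harmonic actions: let `Γ` be
a group with a finite symmetric generating set `S` containing the identity, let `m` be a
symmetric probability distribution on `Γ` with finite second moment with respect to the
word length `l_S`, and fix `ξ ≥ 1`, `δ, Δ > 0`. The set of tuples `(f_γ)_{γ∈S}` of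
continuous self-maps of `ℝ` coming from a homomorphism `ρ` of `Γ` into the group of
strictly increasing bijections (order automorphisms) of `ℝ` satisfying
(1) bounded displacement from above, (2) bounded displacement from below,
(3) Lipschitz regularity, and (4) harmonicity,
is a compact subset of `C(ℝ,ℝ)^S` with the product of compact-open topologies. -/
theorem stmt_11 {Γ : Type*} [Group Γ] (S : Finset Γ)
    (hS1 : (1 : Γ) ∈ S) (hSsymm : ∀ γ ∈ S, γ⁻¹ ∈ S)
    (hSgen : Subgroup.closure (S : Set Γ) = ⊤)
    (m : Γ → ℝ) (hm0 : ∀ γ, 0 ≤ m γ) (hmsymm : ∀ γ, m γ⁻¹ = m γ)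
    (hm1 : HasSum m 1)
    (hmoment : Summable fun γ => (wordLength (S : Set Γ) γ : ℝ) ^ 2 * m γ)
    (ξ : ℝ) (hξ : 1 ≤ ξ) (δ Δ : ℝ) (hδ : 0 < δ) (hΔ : 0 < Δ) :
    IsCompact {f : S → C(ℝ, ℝ) |
      ∃ ρ : Γ →* (ℝ ≃o ℝ),
        (∀ γ : S, ∀ x : ℝ, ρ (γ : Γ) x = f γ x) ∧
        (∀ γ ∈ S, ∀ x : ℝ, |ρ γ x - x| ≤ Δ) ∧
        (∀ x : ℝ, δ ^ 2 ≤ ∑' γ : Γ, (ρ γ x - x) ^ 2 * m γ) ∧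
        (∀ γ ∈ S, ∀ x y : ℝ, |ρ γ x - ρ γ y| ≤ ξ * |x - y|) ∧
        (∀ x : ℝ, ∑' γ : Γ, (ρ γ x) * m γ = x)} := by
  classical
  -- abbreviate the word length
  set l : Γ → ℝ := fun γ => (wordLength (S : Set Γ) γ : ℝ) with hl
  have hl0 : ∀ γ, 0 ≤ l γ := fun γ => Nat.cast_nonneg _
  -- summability facts
  have hlm : Summable fun γ => l γ * m γ := by
    refine Summable.of_nonneg_of_le (fun γ => mul_nonneg (hl0 γ) (hm0 γ))
      (fun γ => ?_) (hm1.summable.add hmoment)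
    have h1 : l γ ≤ 1 + l γ ^ 2 := by nlinarith [hl0 γ]
    nlinarith [hm0 γ, hl0 γ]
  -- the compact "box"
  have hPcomp := isCompact_lipDisp (Δ := Δ) hξ
  set K := {f : S → C(ℝ, ℝ) |
      ∃ ρ : Γ →* (ℝ ≃o ℝ),
        (∀ γ : S, ∀ x : ℝ, ρ (γ : Γ) x = f γ x) ∧
        (∀ γ ∈ S, ∀ x : ℝ, |ρ γ x - x| ≤ Δ) ∧
        (∀ x : ℝ, δ ^ 2 ≤ ∑' γ : Γ, (ρ γ x - x) ^ 2 * m γ) ∧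
        (∀ γ ∈ S, ∀ x y : ℝ, |ρ γ x - ρ γ y| ≤ ξ * |x - y|) ∧
        (∀ x : ℝ, ∑' γ : Γ, (ρ γ x) * m γ = x)} with hKdef
  have hsub : K ⊆ Set.pi Set.univ fun _ : S =>
      {g : C(ℝ, ℝ) | (∀ x : ℝ, |g x - x| ≤ Δ) ∧
        ∀ x y : ℝ, |g x - g y| ≤ ξ * |x - y|} := by
    rintro f ⟨ρ, h0, h1, h2, h3, h4⟩ γ _
    constructor
    · intro x
      rw [← h0 γ x]
      exact h1 γ γ.2 x
    · intro x y
      rw [← h0 γ x, ← h0 γ y]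
      exact h3 γ γ.2 x y
  have hclosed : IsClosed K := by
    apply IsSeqClosed.isClosed
    intro fs f hfs hlim
    choose ρ h0 h1 h2 h3 h4 using hfs
    have hcoord : ∀ γ : S, Tendsto (fun n => fs n γ) atTop (nhds (f γ)) :=
      fun γ => tendsto_pi_nhds.mp hlim γ
    set cm : (ℝ ≃o ℝ) → C(ℝ, ℝ) := fun e => ⟨e, e.continuous⟩ with hcmdef
    have hcm : ∀ (n : ℕ) (γ : S), cm (ρ n γ) = fs n γ :=
      fun n γ => ContinuousMap.ext (h0 n γ)
    have hconv : ∀ γ : Γ, ∃ g : C(ℝ, ℝ),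
        Tendsto (fun n => cm (ρ n γ)) atTop (nhds g) := by
      intro γ
      induction mem_monoid_closure S hSsymm hSgen γ using Submonoid.closure_induction with
      | mem s hs =>
        exact ⟨f ⟨s, hs⟩, by
          refine (hcoord ⟨s, hs⟩).congr fun n => ?_
          exact (hcm n ⟨s, hs⟩).symm⟩
      | one =>
        refine ⟨cm 1, ?_⟩
        have : ∀ n : ℕ, cm (ρ n 1) = cm 1 := fun n => by rw [map_one]
        exact tendsto_const_nhds.congr fun n => (this n).symm
      | mul a b ha hb iha ihb =>
        obtain ⟨ga, hga⟩ := iha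
        obtain ⟨gb, hgb⟩ := ihb
        refine ⟨ga.comp gb, ?_⟩
        have hcomp := hga.compCM hgb
        refine hcomp.congr fun n => ?_
        ext x
        show (cm (ρ n a)) ((cm (ρ n b)) x) = (cm (ρ n (a * b))) x
        simp only [hcmdef, ContinuousMap.coe_mk, map_mul]
        rfl
    choose g hg using hconv
    have hgx : ∀ (γ : Γ) (x : ℝ), Tendsto (fun n => ρ n γ x) atTop (nhds (g γ x)) :=
      fun γ x => ((continuous_eval_const x).tendsto _).comp (hg γ)
    have hgmul : ∀ a b : Γ, ∀ x : ℝ, g (a * b) x = g a (g b x) := by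
      intro a b x
      have hcomp := (hg a).compCM (hg b)
      have hcomp' : Tendsto (fun n => cm (ρ n (a * b))) atTop (nhds ((g a).comp (g b))) := by
        refine hcomp.congr fun n => ?_
        ext y
        show (cm (ρ n a)) ((cm (ρ n b)) y) = (cm (ρ n (a * b))) y
        simp only [hcmdef, ContinuousMap.coe_mk, map_mul]
        rfl
      have := tendsto_nhds_unique (hg (a * b)) hcomp'
      rw [this]
      rfl
    have hg1 : ∀ x : ℝ, g 1 x = x := by
      intro x
      have h1' : Tendsto (fun n => cm (ρ n 1)) atTop (nhds (cm 1)) := by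
        have : ∀ n : ℕ, cm (ρ n 1) = cm 1 := fun n => by rw [map_one]
        exact tendsto_const_nhds.congr fun n => (this n).symm
      have := tendsto_nhds_unique (hg 1) h1'
      rw [this]
      rfl
    have hgmono : ∀ γ : Γ, Monotone fun x => g γ x := by
      intro γ x y hxy
      exact le_of_tendsto_of_tendsto' (hgx γ x) (hgx γ y)
        fun n => (ρ n γ).monotone hxy
    have hginv : ∀ (γ : Γ) (x : ℝ), g γ (g γ⁻¹ x) = x := by
      intro γ x
      have := hgmul γ γ⁻¹ x
      rw [mul_inv_cancel] at this
      rw [← this, hg1]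
    have hginv' : ∀ (γ : Γ) (x : ℝ), g γ⁻¹ (g γ x) = x := by
      intro γ x
      have := hginv γ⁻¹ x
      rwa [inv_inv] at this
    set E : Γ → (ℝ ≃o ℝ) := fun γ =>
      { toFun := g γ
        invFun := g γ⁻¹
        left_inv := fun x => hginv' γ x
        right_inv := fun x => hginv γ x
        map_rel_iff' := by
          intro a b
          constructor
          · intro h
            have := hgmono γ⁻¹ h
            simpa [hginv' γ a, hginv' γ b] using this
          · intro h
            exact hgmono γ h } with hEdef
    set ρ' : Γ →* (ℝ ≃o ℝ) := MonoidHom.mk' E (fun a b => by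
      ext x
      exact hgmul a b x) with hρ'def
    have hρ'app : ∀ (γ : Γ) (x : ℝ), ρ' γ x = g γ x := fun γ x => rfl
    -- displacement bound for each n
    have hdisp : ∀ (n : ℕ) (γ : Γ) (x : ℝ), |ρ n γ x - x| ≤ Δ * l γ :=
      fun n γ x => displacement_bound S hSsymm hSgen (ρ n) (h1 n) γ x
    refine ⟨ρ', ?_, ?_, ?_, ?_, ?_⟩
    · -- agreement with f on S
      intro γ x
      have hgf : g (γ : Γ) = f γ := by
        refine tendsto_nhds_unique ((hg (γ : Γ)).congr fun n => hcm n γ) (hcoord γ)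
      rw [hρ'app, hgf]
    · -- (1)
      intro γ hγ x
      refine le_of_tendsto (((hgx γ x).sub tendsto_const_nhds).abs) ?_
      exact Eventually.of_forall fun n => h1 n γ hγ x
    · -- (2)
      intro x
      have hbsum : Summable fun γ : Γ => Δ ^ 2 * (l γ ^ 2 * m γ) := by
        refine (hmoment.mul_left (Δ ^ 2)).congr fun γ => ?_
        rw [hl]
      have htt : Tendsto (fun n => ∑' γ : Γ, (ρ n γ x - x) ^ 2 * m γ) atTop
          (nhds (∑' γ : Γ, (g γ x - x) ^ 2 * m γ)) := by
        refine tendsto_tsum_of_dominated_convergence hbsum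
          (fun γ => (((hgx γ x).sub tendsto_const_nhds).pow 2).mul tendsto_const_nhds) ?_
        refine Eventually.of_forall fun n γ => ?_
        have hd := hdisp n γ x
        have hmγ := hm0 γ
        rw [Real.norm_eq_abs, abs_of_nonneg (by positivity)]
        have hsq : (ρ n γ x - x) ^ 2 ≤ (Δ * l γ) ^ 2 := by
          have := abs_nonneg (ρ n γ x - x)
          nlinarith [sq_abs (ρ n γ x - x)]
        calc (ρ n γ x - x) ^ 2 * m γ ≤ (Δ * l γ) ^ 2 * m γ :=
              mul_le_mul_of_nonneg_right hsq hmγ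
          _ = Δ ^ 2 * (l γ ^ 2 * m γ) := by ring
      exact ge_of_tendsto htt (Eventually.of_forall fun n => h2 n x)
    · -- (3)
      intro γ hγ x y
      refine le_of_tendsto (((hgx γ x).sub (hgx γ y)).abs) ?_
      exact Eventually.of_forall fun n => h3 n γ hγ x y
    · -- (4)
      intro x
      have hbsum : Summable fun γ : Γ => (|x| + Δ * l γ) * m γ := by
        have h' : Summable fun γ : Γ => |x| * m γ + Δ * (l γ * m γ) :=
          (hm1.summable.mul_left (|x|)).add (hlm.mul_left Δ)
        exact h'.congr fun γ => by ring
      have htt : Tendsto (fun n => ∑' γ : Γ, (ρ n γ x) * m γ) atTop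
          (nhds (∑' γ : Γ, (g γ x) * m γ)) := by
        refine tendsto_tsum_of_dominated_convergence hbsum
          (fun γ => (hgx γ x).mul tendsto_const_nhds) ?_
        refine Eventually.of_forall fun n γ => ?_
        have hd := hdisp n γ x
        have hmγ := hm0 γ
        rw [Real.norm_eq_abs, abs_mul, abs_of_nonneg hmγ]
        refine mul_le_mul_of_nonneg_right ?_ hmγ
        calc |ρ n γ x| = |x + (ρ n γ x - x)| := by ring_nf
          _ ≤ |x| + |ρ n γ x - x| := abs_add_le _ _
          _ ≤ |x| + Δ * l γ := by linarith
      have hconst : Tendsto (fun _ : ℕ => x) atTop (nhds (∑' γ : Γ, (g γ x) * m γ)) :=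
        htt.congr fun n => h4 n x
      have hfin := tendsto_nhds_unique hconst tendsto_const_nhds
      calc (∑' γ : Γ, (ρ' γ) x * m γ) = ∑' γ : Γ, (g γ) x * m γ := by
            exact tsum_congr fun γ => by rw [hρ'app]
        _ = x := hfin
  exact (isCompact_univ_pi fun _ => hPcomp).of_isClosed_subset hclosed hsub
end

section
/- Let ι be a nonempty finite index type, A a normed ring, λ : ι → ι → ℝ and λ₀ > 0 such that λ(α, β) ≥ λ₀ for all α, β and λ(α, γ) ≤ λ(α, β) + λ(β, γ) for all α, β, γ. Let C ≥ 0 and let (E_n)_{n ≥ 1} be a sequence of ι × ι matrices with entries in A such that ‖(E_n)_{α,β}‖ ≤ C·exp(−n·λ(α, β)) for all n ≥ 1 and all α, β. For n ≥ 1 and k ≥ 0 define the matrix F_{n,k} by 1 + F_{n,k} = (1 + E_n)(1 + E_{n+1})⋯(1 + E_{n+k}), where 1 denotes the identity matrix. Then there exists a constant C' ≥ 0, independent of n and k, such that ‖(F_{n,k})_{α,β}‖ ≤ C'·exp(−n·λ(α, β)) for all n ≥ 1, all k ≥ 0 and all α, β. -/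
/-- uniform multi-exponential bound on matrix products: let `ι` be a
nonempty finite index type, `A` a normed ring, and `λ : ι → ι → ℝ` bounded below by
`λ₀ > 0` and satisfying the triangle inequality `λ(α,γ) ≤ λ(α,β) + λ(β,γ)`. If the
matrices `E_n` (for `n ≥ 1`) satisfy `‖(E_n)_{α,β}‖ ≤ C·exp(−n·λ(α,β))`, then the
matrices `F_{n,k}` defined by `1 + F_{n,k} = (1+E_n)(1+E_{n+1})⋯(1+E_{n+k})` satisfy
`‖(F_{n,k})_{α,β}‖ ≤ C'·exp(−n·λ(α,β))` for a constant `C'` independent of `n` and `k`. -/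
theorem stmt_13 {ι : Type*} [Fintype ι] [Nonempty ι] [DecidableEq ι]
    {A : Type*} [NormedRing A]
    (lam : ι → ι → ℝ) (lam0 : ℝ) (hlam0 : 0 < lam0)
    (hlb : ∀ α β, lam0 ≤ lam α β)
    (htri : ∀ α β γ, lam α γ ≤ lam α β + lam β γ)
    (C : ℝ) (hC : 0 ≤ C) (E : ℕ → Matrix ι ι A)
    (hE : ∀ n, 1 ≤ n → ∀ α β, ‖E n α β‖ ≤ C * Real.exp (-(n : ℝ) * lam α β)) :
    ∃ C' : ℝ, 0 ≤ C' ∧ ∀ n, 1 ≤ n → ∀ k : ℕ, ∀ α β,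
      ‖((((List.range (k + 1)).map fun j => (1 : Matrix ι ι A) + E (n + j)).prod
          - 1) : Matrix ι ι A) α β‖ ≤ C' * Real.exp (-(n : ℝ) * lam α β) := by
  classical
  set N : ℝ := (Fintype.card ι : ℝ) with hN
  have hN0 : (0:ℝ) ≤ N := Nat.cast_nonneg _
  set q : ℝ := Real.exp (-lam0) with hq
  have hq0 : 0 < q := Real.exp_pos _
  have hq1 : q < 1 := by
    rw [hq, Real.exp_lt_one_iff]
    linarith
  set M : ℝ := (N + 1) * C with hM
  have hM0 : 0 ≤ M := by positivity
  set b : ℕ → ℝ := fun k => (C + 1) * ∏ j ∈ Finset.range k, (1 + M * q ^ (j + 1)) with hb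
  have hb1 : ∀ k, 1 ≤ b k := by
    intro k
    have h1 : (1:ℝ) ≤ ∏ j ∈ Finset.range k, (1 + M * q ^ (j+1)) := by
      have := Finset.prod_le_prod (s := Finset.range k) (f := fun _ => (1:ℝ))
        (g := fun j => 1 + M * q ^ (j+1)) (fun j _ => zero_le_one)
        (fun j _ => by show (1:ℝ) ≤ 1 + M * q ^ (j+1); nlinarith [pow_nonneg hq0.le (j+1)])
      simpa using this
    simp only [hb]
    nlinarith
  have hbsucc : ∀ k, b (k+1) = b k * (1 + M * q ^ (k+1)) := by
    intro k; simp only [hb, Finset.prod_range_succ]; ring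
  set C' : ℝ := (C + 1) * Real.exp (M / (1 - q)) with hC'
  have hbC' : ∀ k, b k ≤ C' := by
    intro k
    have hprod : ∏ j ∈ Finset.range k, (1 + M * q ^ (j+1)) ≤
        Real.exp (∑ j ∈ Finset.range k, M * q ^ (j+1)) := by
      rw [Real.exp_sum]
      refine Finset.prod_le_prod (fun j _ => by nlinarith [pow_nonneg hq0.le (j+1)])
        (fun j _ => by linarith [Real.add_one_le_exp (M * q ^ (j+1))])
    have hsum : ∑ j ∈ Finset.range k, M * q ^ (j+1) ≤ M / (1 - q) := by
      have h1 : ∑ j ∈ Finset.range k, M * q ^ (j+1) ≤ ∑ j ∈ Finset.range k, M * q ^ j := by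
        refine Finset.sum_le_sum fun j _ => ?_
        have : q ^ (j+1) ≤ q ^ j := pow_le_pow_of_le_one hq0.le hq1.le (by omega)
        nlinarith
      have h2 : ∑ j ∈ Finset.range k, q ^ j ≤ 1 / (1 - q) := by
        calc ∑ j ∈ Finset.range k, q ^ j = ∑ j ∈ Finset.Ico 0 k, q ^ j := by
              rw [Finset.range_eq_Ico]
          _ ≤ q ^ 0 / (1 - q) := geom_sum_Ico_le_of_lt_one hq0.le hq1
          _ = 1 / (1 - q) := by rw [pow_zero]
      calc ∑ j ∈ Finset.range k, M * q ^ (j+1) ≤ ∑ j ∈ Finset.range k, M * q ^ j := h1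
        _ = M * ∑ j ∈ Finset.range k, q ^ j := by rw [Finset.mul_sum]
        _ ≤ M * (1 / (1 - q)) := by nlinarith
        _ = M / (1 - q) := by ring
    calc b k ≤ (C + 1) * Real.exp (∑ j ∈ Finset.range k, M * q ^ (j+1)) := by
          simp only [hb]
          exact mul_le_mul_of_nonneg_left hprod (by linarith)
      _ ≤ C' := by
          simp only [hC']
          exact mul_le_mul_of_nonneg_left (Real.exp_le_exp.2 hsum) (by linarith)
  have hexpow : ∀ k : ℕ, q ^ (k+1) = Real.exp (-((k:ℝ)+1) * lam0) := by
    intro k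
    rw [hq, ← Real.exp_nat_mul]
    push_cast
    ring_nf
  -- key exponent lemma 1
  have hexp1 : ∀ (n k : ℕ) (α β : ι),
      Real.exp (-((n:ℝ)+(k:ℝ)+1) * lam α β) ≤ q ^ (k+1) * Real.exp (-(n:ℝ) * lam α β) := by
    intro n k α β
    rw [hexpow, ← Real.exp_add, Real.exp_le_exp]
    have h1 := hlb α β
    have hk : (0:ℝ) ≤ (k:ℝ) + 1 := by positivity
    nlinarith
  have hexp2 : ∀ (n k : ℕ) (α β γ : ι),
      Real.exp (-(n:ℝ) * lam α γ) * Real.exp (-((n:ℝ)+(k:ℝ)+1) * lam γ β) ≤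
        q ^ (k+1) * Real.exp (-(n:ℝ) * lam α β) := by
    intro n k α β γ
    rw [hexpow, ← Real.exp_add, ← Real.exp_add, Real.exp_le_exp]
    have h1 := hlb γ β
    have h2 := htri α γ β
    have hk : (0:ℝ) ≤ (k:ℝ) + 1 := by positivity
    have hn : (0:ℝ) ≤ (n:ℝ) := Nat.cast_nonneg _
    nlinarith
  have key : ∀ k n, 1 ≤ n → ∀ α β,
      ‖((((List.range (k + 1)).map fun j => (1 : Matrix ι ι A) + E (n + j)).prod
          - 1) : Matrix ι ι A) α β‖ ≤ (b k - 1) * Real.exp (-(n:ℝ) * lam α β) := by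
    intro k
    induction k with
    | zero =>
      intro n hn α β
      have : ((List.range 1).map fun j => (1 : Matrix ι ι A) + E (n + j)).prod
          = 1 + E n := by simp [List.range_succ]
      rw [this, add_sub_cancel_left]
      have : b 0 - 1 = C := by simp [hb]
      rw [this]
      exact hE n hn α β
    | succ k ih =>
      intro n hn α β
      have hsplit : ((List.range (k + 1 + 1)).map fun j => (1 : Matrix ι ι A) + E (n + j)).prod
          = ((List.range (k + 1)).map fun j => (1 : Matrix ι ι A) + E (n + j)).prod
            * (1 + E (n + (k+1))) := by
        rw [List.range_succ, List.map_append, List.prod_append]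
        simp
      set G : Matrix ι ι A :=
        ((List.range (k + 1)).map fun j => (1 : Matrix ι ι A) + E (n + j)).prod - 1 with hG
      set E' : Matrix ι ι A := E (n + (k+1)) with hE'
      have hrw : ((List.range (k + 1 + 1)).map fun j => (1 : Matrix ι ι A) + E (n + j)).prod - 1
          = G + E' + G * E' := by
        rw [hsplit]
        have h : ((List.range (k + 1)).map fun j => (1 : Matrix ι ι A) + E (n + j)).prod
            = 1 + G := by rw [hG]; abel
        rw [h]
        noncomm_ring
      rw [hrw]
      have hGb : ∀ γ, ‖G α γ‖ ≤ (b k - 1) * Real.exp (-(n:ℝ) * lam α γ) := fun γ => ih n hn α γ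
      have hE'b : ∀ γ δ, ‖E' γ δ‖ ≤ C * Real.exp (-((n:ℝ)+(k:ℝ)+1) * lam γ δ) := by
        intro γ δ
        have := hE (n + (k+1)) (by omega) γ δ
        rw [hE']
        convert this using 3
        push_cast
        ring
      have hent : (G + E' + G * E') α β = G α β + E' α β + (G * E') α β := by
        simp [Matrix.add_apply]
      rw [hent]
      have hmulb : ‖(G * E') α β‖ ≤ N * ((b k - 1) * C * (q ^ (k+1) * Real.exp (-(n:ℝ) * lam α β))) := by
        rw [Matrix.mul_apply]
        calc ‖∑ γ, G α γ * E' γ β‖ ≤ ∑ γ, ‖G α γ * E' γ β‖ := norm_sum_le _ _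
          _ ≤ ∑ γ : ι, (b k - 1) * C * (q ^ (k+1) * Real.exp (-(n:ℝ) * lam α β)) := by
              refine Finset.sum_le_sum fun γ _ => ?_
              calc ‖G α γ * E' γ β‖ ≤ ‖G α γ‖ * ‖E' γ β‖ := norm_mul_le _ _
                _ ≤ ((b k - 1) * Real.exp (-(n:ℝ) * lam α γ)) *
                      (C * Real.exp (-((n:ℝ)+(k:ℝ)+1) * lam γ β)) := by
                    refine mul_le_mul (hGb γ) (hE'b γ β) (norm_nonneg _) ?_
                    have h1 := hb1 k
                    have := (Real.exp_pos (-(n:ℝ) * lam α γ)).le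
                    nlinarith
                _ = (b k - 1) * C * (Real.exp (-(n:ℝ) * lam α γ) *
                      Real.exp (-((n:ℝ)+(k:ℝ)+1) * lam γ β)) := by ring
                _ ≤ (b k - 1) * C * (q ^ (k+1) * Real.exp (-(n:ℝ) * lam α β)) := by
                    refine mul_le_mul_of_nonneg_left (hexp2 n k α β γ) ?_
                    have := hb1 k
                    nlinarith
          _ = N * ((b k - 1) * C * (q ^ (k+1) * Real.exp (-(n:ℝ) * lam α β))) := by
              rw [Finset.sum_const, Finset.card_univ, nsmul_eq_mul, hN]
      have hE'b2 : ‖E' α β‖ ≤ C * (q ^ (k+1) * Real.exp (-(n:ℝ) * lam α β)) := by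
        calc ‖E' α β‖ ≤ C * Real.exp (-((n:ℝ)+(k:ℝ)+1) * lam α β) := hE'b α β
          _ ≤ C * (q ^ (k+1) * Real.exp (-(n:ℝ) * lam α β)) :=
              mul_le_mul_of_nonneg_left (hexp1 n k α β) hC
      calc ‖G α β + E' α β + (G * E') α β‖
          ≤ ‖G α β‖ + ‖E' α β‖ + ‖(G * E') α β‖ := norm_add₃_le
        _ ≤ (b k - 1) * Real.exp (-(n:ℝ) * lam α β)
            + C * (q ^ (k+1) * Real.exp (-(n:ℝ) * lam α β))
            + N * ((b k - 1) * C * (q ^ (k+1) * Real.exp (-(n:ℝ) * lam α β))) :=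
            add_le_add (add_le_add (hGb β) hE'b2) hmulb
        _ ≤ (b (k+1) - 1) * Real.exp (-(n:ℝ) * lam α β) := by
            rw [hbsucc k, hM]
            have h1 := hb1 k
            have h2 : 0 ≤ q ^ (k+1) := pow_nonneg hq0.le _
            have h3 := (Real.exp_pos (-(n:ℝ) * lam α β)).le
            have hcoef : (b k - 1) + C * q ^ (k+1) + N * ((b k - 1) * C * q ^ (k+1))
                ≤ b k * (1 + (N + 1) * C * q ^ (k+1)) - 1 := by
              nlinarith [mul_nonneg (mul_nonneg hC h2) (show (0:ℝ) ≤ b k + N - 1 by linarith)]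
            calc (b k - 1) * Real.exp (-(n:ℝ) * lam α β)
                  + C * (q ^ (k+1) * Real.exp (-(n:ℝ) * lam α β))
                  + N * ((b k - 1) * C * (q ^ (k+1) * Real.exp (-(n:ℝ) * lam α β)))
                = ((b k - 1) + C * q ^ (k+1) + N * ((b k - 1) * C * q ^ (k+1)))
                    * Real.exp (-(n:ℝ) * lam α β) := by ring
              _ ≤ (b k * (1 + (N + 1) * C * q ^ (k+1)) - 1) * Real.exp (-(n:ℝ) * lam α β) :=
                  mul_le_mul_of_nonneg_right hcoef h3
  refine ⟨C', by positivity, fun n hn k α β => ?_⟩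
  calc ‖((((List.range (k + 1)).map fun j => (1 : Matrix ι ι A) + E (n + j)).prod
          - 1) : Matrix ι ι A) α β‖ ≤ (b k - 1) * Real.exp (-(n:ℝ) * lam α β) := key k n hn α β
    _ ≤ C' * Real.exp (-(n:ℝ) * lam α β) := by
        have := hbC' k
        have := Real.exp_pos (-(n:ℝ) * lam α β)
        nlinarith
end

section
/- Let Z be a topological space in which bounded continuous real-valued functions separate points (i.e., for any two distinct points x, y ∈ Z there is a bounded continuous u : Z → ℝ with u(x) ≠ u(y)), and let φ : ℝ × Z → Z be a continuous flow. Let x ∈ Z be a point whose orbit is nontrivial, i.e. φ(t₀, x) ≠ x for some t₀ ∈ ℝ. Then there exist continuous functions F, G : Z → ℝ such that for every z ∈ Z the map s ↦ F(φ(s, z)) is differentiable at every t ∈ ℝ with derivative G(φ(t, z)), and such that G(x) ≠ 0. -/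
open intervalIntegral MeasureTheory

/-- existence of a `C¹`-along-the-flow function with nonvanishing
derivative at a point with nontrivial orbit: let `Z` be a topological space in which
bounded continuous real functions separate points and `φ` a continuous flow on `Z`.
If `x ∈ Z` satisfies `φ(t₀, x) ≠ x` for some `t₀`, then there exist continuous
`F, G : Z → ℝ` such that `s ↦ F(φ(s,z))` has derivative `G(φ(t,z))` at every `t` for
every `z`, and `G(x) ≠ 0`. -/
theorem stmt_16 {Z : Type*} [TopologicalSpace Z]
    (hsep : ∀ x y : Z, x ≠ y →
      ∃ u : Z → ℝ, Continuous u ∧ (∃ C : ℝ, ∀ z, |u z| ≤ C) ∧ u x ≠ u y)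
    (φ : Flow ℝ Z) (x : Z) (t₀ : ℝ) (hx : φ t₀ x ≠ x) :
    ∃ F G : Z → ℝ, Continuous F ∧ Continuous G ∧
      (∀ (z : Z) (t : ℝ), HasDerivAt (fun s : ℝ => F (φ s z)) (G (φ t z)) t) ∧
      G x ≠ 0 := by
  obtain ⟨u, hu, -, hune⟩ := hsep (φ t₀ x) x hx
  refine ⟨fun z => ∫ s in (0:ℝ)..t₀, u (φ s z), fun z => u (φ t₀ z) - u z, ?_, ?_, ?_, ?_⟩
  · exact continuous_parametric_intervalIntegral_of_continuous'
      (f := fun z s => u (φ s z)) (hu.comp (φ.cont'.comp (continuous_snd.prodMk continuous_fst)))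
      0 t₀
  · exact (hu.comp (φ.cont'.comp (continuous_const.prodMk continuous_id))).sub hu
  · intro z t
    have hc : Continuous fun s : ℝ => u (φ s z) :=
      hu.comp (φ.cont'.comp (continuous_id.prodMk continuous_const))
    have hfun : (fun s : ℝ => ∫ r in (0:ℝ)..t₀, u (φ r (φ s z)))
        = fun s : ℝ => (∫ r in (0:ℝ)..(s + t₀), u (φ r z)) - ∫ r in (0:ℝ)..s, u (φ r z) := by
      funext s
      have h : ∀ r : ℝ, u (φ r (φ s z)) = u (φ (r + s) z) := fun r => by rw [← φ.map_add]
      simp_rw [h]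
      rw [intervalIntegral.integral_comp_add_right (fun r => u (φ r z)) s, zero_add,
        add_comm t₀ s,
        ← intervalIntegral.integral_add_adjacent_intervals
          (hc.intervalIntegrable 0 s) (hc.intervalIntegrable s (s + t₀))]
      ring
    have h1 : HasDerivAt (fun r : ℝ => ∫ s in (0:ℝ)..r, u (φ s z)) (u (φ t z)) t :=
      intervalIntegral.integral_hasDerivAt_right (hc.intervalIntegrable 0 t)
        (hc.stronglyMeasurableAtFilter _ _) hc.continuousAt
    have h2 : HasDerivAt (fun r : ℝ => ∫ s in (0:ℝ)..r, u (φ s z)) (u (φ (t + t₀) z)) (t + t₀) :=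
      intervalIntegral.integral_hasDerivAt_right (hc.intervalIntegrable 0 (t + t₀))
        (hc.stronglyMeasurableAtFilter _ _) hc.continuousAt
    have h3 : HasDerivAt (fun r : ℝ => ∫ s in (0:ℝ)..(r + t₀), u (φ s z))
        (u (φ (t + t₀) z)) t := by
      simpa [Function.comp_def] using h2.comp t ((hasDerivAt_id t).add_const t₀)
    have hG : u (φ t₀ (φ t z)) - u (φ t z) = u (φ (t + t₀) z) - u (φ t z) := by
      rw [← φ.map_add, add_comm]
    show HasDerivAt (fun s : ℝ => ∫ r in (0:ℝ)..t₀, u (φ r (φ s z)))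
      (u (φ t₀ (φ t z)) - u (φ t z)) t
    rw [hfun, hG]
    exact h3.sub h1
  · simpa using sub_ne_zero_of_ne hune
end

section
/- Let Γ be a countable group acting on ℝ by strictly increasing bijections, via a homomorphism ρ from Γ to the group of increasing bijections of ℝ, and let m_Γ be a probability measure on Γ such that for every x ∈ ℝ the function γ ↦ ρ(γ)(x) is m_Γ-integrable (Σ_γ |ρ(γ)(x)|·m_Γ(γ) < ∞) and satisfies the harmonicity condition Σ_{γ∈Γ} ρ(γ)(x)·m_Γ(γ) = x. Equip Ω := Γ^ℕ with the product measure m_Γ^⊗ℕ and for ω = (g_1, g_2, …) ∈ Ω set l_n(ω) := g_n·g_{n−1}⋯g_1. Then for every pair of real numbers x ≤ y, for m_Γ^⊗ℕ-almost every ω the sequence of nonnegative numbers n ↦ ρ(l_n(ω))(y) − ρ(l_n(ω))(x) converges to a finite limit as n → ∞. -/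
open MeasureTheory

open ProbabilityTheory Filter in
private lemma indep_mono_right {Ω : Type*} {m₁ m₂ m₂' mΩ : MeasurableSpace Ω}
    {P : Measure Ω} (h : ProbabilityTheory.Indep (_mΩ := mΩ) m₁ m₂ P) (hle : m₂' ≤ m₂) :
    ProbabilityTheory.Indep (_mΩ := mΩ) m₁ m₂' P := by
  rw [ProbabilityTheory.Indep_iff] at h ⊢
  exact fun t1 t2 h1 h2 => h t1 t2 h1 (hle _ h2)

/-- martingale convergence of interval lengths under a harmonic random
walk: let `Γ` be a countable group acting on `ℝ` by strictly increasing bijections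
(order automorphisms) via a homomorphism `ρ`, and let `m` be a probability measure on
`Γ` such that for every `x ∈ ℝ` the function `γ ↦ ρ(γ)(x)` is integrable and
`∫ ρ(γ)(x) dm(γ) = x`. If `(g_n)` is an i.i.d. sequence with common distribution `m`
(`Ω` with the product measure is the law of such a sequence) and
`l_n = g_{n}·g_{n-1}⋯g_1`, then for all `x ≤ y`, almost surely the nonnegative sequence
`n ↦ ρ(l_n)(y) − ρ(l_n)(x)` converges to a finite limit. -/
theorem stmt_17 {Γ : Type*} [Group Γ] [Countable Γ] [MeasurableSpace Γ]
    [MeasurableSingletonClass Γ]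
    (ρ : Γ →* (ℝ ≃o ℝ))
    (m : Measure Γ) [IsProbabilityMeasure m]
    (hint : ∀ x : ℝ, Integrable (fun γ => ρ γ x) m)
    (hharm : ∀ x : ℝ, (∫ γ, ρ γ x ∂m) = x)
    {Ω : Type*} [MeasurableSpace Ω] (P : Measure Ω) [IsProbabilityMeasure P]
    (g : ℕ → Ω → Γ) (hgmeas : ∀ n, Measurable (g n))
    (hindep : ProbabilityTheory.iIndepFun g P)
    (hdist : ∀ n, P.map (g n) = m)
    (x y : ℝ) (hxy : x ≤ y) :
    ∀ᵐ ω ∂P, ∃ c : ℝ,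
      Filter.Tendsto
        (fun n : ℕ =>
          ρ (((List.range n).reverse.map fun i => g i ω).prod) y -
            ρ (((List.range n).reverse.map fun i => g i ω).prod) x)
        Filter.atTop (nhds c) := by
  classical
  open ProbabilityTheory Filter in
  -- the random walk
  set L : ℕ → Ω → Γ := fun n ω => ((List.range n).reverse.map fun i => g i ω).prod with hLdef
  have hLsucc : ∀ n ω, L (n + 1) ω = g n ω * L n ω := by
    intro n ω
    simp [hLdef, List.range_succ]
  -- the martingale
  set f : ℕ → Ω → ℝ := fun n ω => ρ (L n ω) y - ρ (L n ω) x with hfdef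
  -- the filtration
  set Fσ : ℕ → MeasurableSpace Ω :=
    fun n => ⨆ i ∈ Set.Iio n, MeasurableSpace.comap (g i) inferInstance with hFσdef
  have hFσle : ∀ n, Fσ n ≤ ‹MeasurableSpace Ω› := by
    intro n
    exact iSup₂_le fun i _ => (hgmeas i).comap_le
  set F : Filtration ℕ ‹MeasurableSpace Ω› :=
    ⟨Fσ, fun a b hab => biSup_mono (fun i hi => lt_of_lt_of_le hi hab), hFσle⟩ with hFdef
  have hFapp : ∀ n, F n = Fσ n := fun _ => rfl
  have hgF : ∀ i n, i < n → Measurable[F n] (g i) := by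
    intro i n hin
    refine (measurable_iff_comap_le.2 ?_)
    rw [hFapp]
    exact le_biSup (fun i => MeasurableSpace.comap (g i) inferInstance) hin
  -- measurability of `L n` with respect to `F n`
  have hLF : ∀ n, Measurable[F n] (L n) := by
    intro n
    induction n with
    | zero =>
      have : L 0 = fun _ => (1 : Γ) := by funext ω; simp [hLdef]
      rw [this]; exact measurable_const
    | succ n ih =>
      have : L (n + 1) = (fun p : Γ × Γ => p.1 * p.2) ∘ (fun ω => (g n ω, L n ω)) := by
        funext ω; exact hLsucc n ω
      rw [this]
      exact (measurable_of_countable _).comp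
        ((hgF n (n + 1) (Nat.lt_succ_self n)).prodMk
          (ih.mono (F.mono (Nat.le_succ n)) le_rfl))
  have hL : ∀ n, Measurable (L n) := fun n => (hLF n).mono (F.le n) le_rfl
  -- adaptedness
  have hmfF : ∀ n, Measurable[F n] (f n) := by
    intro n
    have : f n = (fun δ : Γ => ρ δ y - ρ δ x) ∘ L n := rfl
    rw [this]
    exact (measurable_of_countable _).comp (hLF n)
  have hadp : StronglyAdapted F f := fun n => (hmfF n).stronglyMeasurable
  have hmf : ∀ n, Measurable (f n) := fun n => (hmfF n).mono (F.le n) le_rfl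
  have hnonneg : ∀ n ω, 0 ≤ f n ω := by
    intro n ω
    exact sub_nonneg.2 ((ρ (L n ω)).monotone hxy)
  -- basic independence
  have hIndepBase : ∀ n,
      Indep (MeasurableSpace.comap (g n) inferInstance) (F n) P := by
    intro n
    have h := indep_iSup_of_disjoint (m := fun i => MeasurableSpace.comap (g i) inferInstance)
      (fun i => (hgmeas i).comap_le) hindep.iIndep
      (S := {n}) (T := Set.Iio n) (by simp)
    rw [iSup_singleton] at h
    exact h
  have hIndepFun : ∀ n, IndepFun (g n) (L n) P := by
    intro n
    refine (IndepFun_iff_Indep _ _ _).2 ?_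
    exact indep_mono_right (hIndepBase n) (measurable_iff_comap_le.1 (hLF n))
  have hpair : ∀ n, P.map (fun ω => (g n ω, L n ω)) = m.prod (P.map (L n)) := by
    intro n
    have h := (indepFun_iff_map_prod_eq_prod_map_map
      (hgmeas n).aemeasurable (hL n).aemeasurable).1 (hIndepFun n)
    rw [hdist n] at h
    exact h
  -- key harmonicity computation
  have hkey : ∀ a b : ℝ, b ≤ a →
      ∫⁻ γ, ENNReal.ofReal (ρ γ a - ρ γ b) ∂m = ENNReal.ofReal (a - b) := by
    intro a b hba
    have hi : Integrable (fun γ => ρ γ a - ρ γ b) m := (hint a).sub (hint b)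
    rw [← ofReal_integral_eq_lintegral_ofReal hi
      (Filter.Eventually.of_forall fun γ => sub_nonneg.2 ((ρ γ).monotone hba))]
    rw [integral_sub (hint a) (hint b), hharm, hharm]
  -- the expectation of `f n` is constant
  have hlin : ∀ n, ∫⁻ ω, ENNReal.ofReal (f n ω) ∂P = ENNReal.ofReal (y - x) := by
    intro n
    induction n with
    | zero =>
      have : ∀ ω, f 0 ω = y - x := by intro ω; simp [hfdef, hLdef]
      simp [this]
    | succ n ih =>
      have hD : ∀ ω, f (n + 1) ω =
          (fun p : Γ × Γ => ρ p.1 (ρ p.2 y) - ρ p.1 (ρ p.2 x)) ((g n ω, L n ω)) := by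
        intro ω
        simp only [hfdef, hLsucc n ω, map_mul]
        rfl
      calc ∫⁻ ω, ENNReal.ofReal (f (n + 1) ω) ∂P
          = ∫⁻ ω, (fun p : Γ × Γ => ENNReal.ofReal (ρ p.1 (ρ p.2 y) - ρ p.1 (ρ p.2 x)))
              ((g n ω, L n ω)) ∂P := by
            refine lintegral_congr fun ω => ?_
            rw [hD ω]
        _ = ∫⁻ p, (fun p : Γ × Γ => ENNReal.ofReal (ρ p.1 (ρ p.2 y) - ρ p.1 (ρ p.2 x))) p
              ∂(P.map (fun ω => (g n ω, L n ω))) := by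
            rw [lintegral_map (measurable_of_countable _) ((hgmeas n).prodMk (hL n))]
        _ = ∫⁻ δ, ∫⁻ γ, ENNReal.ofReal (ρ γ (ρ δ y) - ρ γ (ρ δ x)) ∂m ∂(P.map (L n)) := by
            rw [hpair n]
            exact lintegral_prod_symm _ (measurable_of_countable _).aemeasurable
        _ = ∫⁻ δ, ENNReal.ofReal (ρ δ y - ρ δ x) ∂(P.map (L n)) := by
            refine lintegral_congr fun δ => ?_
            exact hkey _ _ ((ρ δ).monotone hxy)
        _ = ∫⁻ ω, ENNReal.ofReal (f n ω) ∂P := by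
            rw [lintegral_map (measurable_of_countable _) (hL n)]
        _ = ENNReal.ofReal (y - x) := ih
  -- integrability
  have hInt : ∀ n, Integrable (f n) P := by
    intro n
    refine ⟨(hmf n).aestronglyMeasurable, ?_⟩
    rw [hasFiniteIntegral_iff_ofReal (Filter.Eventually.of_forall (hnonneg n))]
    rw [hlin n]
    exact ENNReal.ofReal_lt_top
  -- the martingale property
  have hcond : ∀ n, f n =ᵐ[P] P[f (n + 1)|F n] := by
    intro n
    haveI : SigmaFinite (P.trim (F.le n)) := inferInstance
    refine ae_eq_condExp_of_forall_setIntegral_eq (F.le n) (hInt (n + 1))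
      (fun s _ _ => (hInt n).integrableOn) (fun A hA _ => ?_)
      (StronglyMeasurable.aestronglyMeasurable (hadp n))
    -- partition over the value of `L n`
    have hAmeas : MeasurableSet A := F.le n A hA
    set B : Γ → Set Ω := fun δ => A ∩ L n ⁻¹' {δ} with hBdef
    have hBmeas : ∀ δ, MeasurableSet (B δ) :=
      fun δ => hAmeas.inter ((hL n) (measurableSet_singleton δ))
    have hBF : ∀ δ, MeasurableSet[F n] (B δ) :=
      fun δ => MeasurableSet.inter hA ((hLF n) (measurableSet_singleton δ))
    have hBdisj : Pairwise (Function.onFun Disjoint B) := by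
      intro δ δ' hδδ'
      refine Set.disjoint_left.2 fun ω hω hω' => hδδ' ?_
      have h1 : L n ω = δ := hω.2
      have h2 : L n ω = δ' := hω'.2
      rw [← h1, ← h2]
    have hAunion : A = ⋃ δ, B δ := by
      ext ω
      constructor
      · intro hω
        exact Set.mem_iUnion.2 ⟨L n ω, hω, rfl⟩
      · rintro hω
        obtain ⟨δ, hδ⟩ := Set.mem_iUnion.1 hω
        exact hδ.1
    -- termwise computation
    have hterm : ∀ δ : Γ,
        ∫ ω in B δ, f (n + 1) ω ∂P = ∫ ω in B δ, f n ω ∂P := by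
      intro δ
      set hδfun : Ω → ℝ := fun ω => ρ (g n ω) (ρ δ y) - ρ (g n ω) (ρ δ x) with hδdef
      have hδint : Integrable hδfun P := by
        have h1 : Integrable (fun γ : Γ => ρ γ (ρ δ y) - ρ γ (ρ δ x)) (P.map (g n)) := by
          rw [hdist n]; exact (hint _).sub (hint _)
        have := (integrable_map_measure
          (measurable_of_countable _).aestronglyMeasurable (hgmeas n).aemeasurable).1 h1
        exact this
      have hδmeasF : StronglyMeasurable[MeasurableSpace.comap (g n) inferInstance] hδfun := by
        refine Measurable.stronglyMeasurable ?_
        exact (measurable_of_countable (fun γ : Γ => ρ γ (ρ δ y) - ρ γ (ρ δ x))).comp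
          (measurable_iff_comap_le.2 le_rfl)
      have hδexp : ∫ ω, hδfun ω ∂P = ρ δ y - ρ δ x := by
        have h1 : ∫ ω, hδfun ω ∂P
            = ∫ γ, (fun γ : Γ => ρ γ (ρ δ y) - ρ γ (ρ δ x)) γ ∂(P.map (g n)) := by
          rw [integral_map (hgmeas n).aemeasurable
            (measurable_of_countable _).aestronglyMeasurable]
        rw [h1, hdist n, integral_sub (hint _) (hint _), hharm, hharm]
      have hconst : ∀ ω ∈ B δ, f n ω = ρ δ y - ρ δ x := by
        intro ω hω
        have : L n ω = δ := hω.2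
        simp [hfdef, this]
      have hfeq : ∀ ω ∈ B δ, f (n + 1) ω = hδfun ω := by
        intro ω hω
        have hLω : L n ω = δ := hω.2
        simp only [hfdef, hLsucc n ω, map_mul, hLω, hδdef]
        rfl
      calc ∫ ω in B δ, f (n + 1) ω ∂P
          = ∫ ω in B δ, hδfun ω ∂P := setIntegral_congr_fun (hBmeas δ) hfeq
        _ = ∫ ω in B δ, (P[hδfun|F n]) ω ∂P :=
            (setIntegral_condExp (F.le n) hδint (hBF δ)).symm
        _ = ∫ ω in B δ, (fun _ : Ω => ∫ ω', hδfun ω' ∂P) ω ∂P := by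
            refine setIntegral_congr_ae (hBmeas δ) ?_
            filter_upwards [condExp_indep_eq (μ := P) (hgmeas n).comap_le (F.le n)
              hδmeasF (hIndepBase n)] with ω hω _
            exact hω
        _ = (P (B δ)).toReal • (ρ δ y - ρ δ x) := by
            rw [setIntegral_const, hδexp]
            rfl
        _ = ∫ ω in B δ, f n ω ∂P := by
            rw [setIntegral_congr_fun (hBmeas δ) hconst, setIntegral_const]
            rfl
    -- sum up
    calc ∫ ω in A, f n ω ∂P
        = ∑' δ : Γ, ∫ ω in B δ, f n ω ∂P := by
          rw [hAunion]
          exact integral_iUnion hBmeas hBdisj ((hInt n).integrableOn)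
      _ = ∑' δ : Γ, ∫ ω in B δ, f (n + 1) ω ∂P := by
          exact tsum_congr fun δ => (hterm δ).symm
      _ = ∫ ω in A, f (n + 1) ω ∂P := by
          rw [hAunion]
          exact (integral_iUnion hBmeas hBdisj ((hInt (n + 1)).integrableOn)).symm
  -- conclude via martingale convergence
  have hmart : Martingale f F P := martingale_nat hadp hInt hcond
  have hbdd : ∀ n, eLpNorm (f n) 1 P ≤ (y - x).toNNReal := by
    intro n
    rw [eLpNorm_one_eq_lintegral_enorm]
    have h1 : ∀ ω, (‖f n ω‖₊ : ENNReal) = ENNReal.ofReal (f n ω) := by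
      intro ω
      rw [← Real.enorm_eq_ofReal (hnonneg n ω)]
      rfl
    calc ∫⁻ ω, (‖f n ω‖₊ : ENNReal) ∂P
        = ∫⁻ ω, ENNReal.ofReal (f n ω) ∂P := lintegral_congr h1
      _ = ENNReal.ofReal (y - x) := hlin n
      _ ≤ ((y - x).toNNReal : ENNReal) := le_of_eq rfl
  exact hmart.submartingale.exists_ae_tendsto_of_bdd hbdd
end
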